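/- arXiv:2202.13016 — 8 statements merged into one kernel-verified Lean document; each statement's English description precedes it below -/
import Mathlib

section
/- Let m = (m_1,…,m_n) ∈ ℕ^n with not all components equal, let m_k = max_i m_i, let C = { j : m_j = m_k }, c = |C|, and γ = Σ_i m_i. Define the γ×n matrix B by b_{γ,j} = 1 - γ/(c·m_k) for j ∈ C, and b_{i,j} = 1 in all other positions. Then mperm_m(B) = 0. -/
/-- The multipermanent of the `γ × n` matrix `X`. -/
def mperm {γ n : ℕ} (m : Fin n → ℕ) (X : Fin γ → Fin n → ℚ) : ℚ :=
  ∑ σ ∈ Finset.univ.filter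
      (fun σ : Fin γ → Fin n => ∀ j, (Finset.univ.filter (fun i => σ i = j)).card = m j),
    ∏ i, X i (σ i)

/-- Composing with a permutation of the rows does not change fiber cardinalities. -/
lemma fiber_card_comp {γ n : ℕ} (σ : Fin γ → Fin n) (e : Equiv.Perm (Fin γ)) (j : Fin n) :
    (Finset.univ.filter fun i => σ (e i) = j).card
      = (Finset.univ.filter fun i => σ i = j).card := by
  apply Finset.card_bij (fun i _ => e i)
  · intro a ha
    simp only [Finset.mem_filter, Finset.mem_univ, true_and] at ha ⊢
    exact ha
  · intro a _ b _ h
    exact e.injective h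
  · intro b hb
    simp only [Finset.mem_filter, Finset.mem_univ, true_and] at hb
    exact ⟨e.symm b, by simpa using hb, by simp⟩

/-- When the parts of `m` are not all equal, the matrix `B` whose last row
equals `1 - γ/(c·m_k)` in the columns where `m` is maximal and `1` elsewhere
is a zero of the multipermanent. -/
theorem mperm_zero_of_not_all_equal (n : ℕ) (m : Fin n → ℕ)
    (hne : ∃ i j : Fin n, m i ≠ m j) (k : Fin n) (hk : ∀ i, m i ≤ m k) :
    mperm m
      (fun (i : Fin (∑ j, m j)) (j : Fin n) =>
        if i.val = (∑ j, m j) - 1 ∧ m j = m k then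
          1 - (∑ j, m j : ℚ) / (((Finset.univ.filter (fun j : Fin n => m j = m k)).card : ℚ) * m k)
        else 1) = 0 := by
  classical
  have hmk : 0 < m k := by
    rcases hne with ⟨a, b, hab⟩
    by_contra h
    push_neg at h
    have ha := hk a; have hb := hk b
    omega
  set γ := ∑ j, m j with hγdef
  have hγpos : 0 < γ :=
    lt_of_lt_of_le hmk (Finset.single_le_sum (fun _ _ => Nat.zero_le _) (Finset.mem_univ k))
  set C : Finset (Fin n) := Finset.univ.filter (fun j : Fin n => m j = m k) with hC
  have hkC : k ∈ C := by simp [hC]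
  have hCpos : 0 < C.card := Finset.card_pos.mpr ⟨k, hkC⟩
  set q : ℚ := (γ : ℚ) / ((C.card : ℚ) * m k) with hq
  set Last : Fin γ := ⟨γ - 1, Nat.sub_lt hγpos one_pos⟩ with hLast
  set S : Finset (Fin γ → Fin n) :=
    Finset.univ.filter
      (fun σ : Fin γ → Fin n => ∀ j, (Finset.univ.filter (fun i => σ i = j)).card = m j)
    with hS
  -- the product collapses to the last-row entry
  have hprod : ∀ σ : Fin γ → Fin n,
      (∏ i, (fun (i : Fin γ) (j : Fin n) =>
        if i.val = γ - 1 ∧ m j = m k then (1 : ℚ) - q else 1) i (σ i))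
        = (if m (σ Last) = m k then (1 : ℚ) - q else 1) := by
    intro σ
    rw [Finset.prod_eq_single_of_mem Last (Finset.mem_univ _)]
    · simp [hLast]
    · intro i _ hi
      have : i.val ≠ γ - 1 := fun h => hi (Fin.ext (by simp [hLast, h]))
      simp [this]
  -- counting: for each i, j, the σ's in S with σ i = j are equinumerous with σ Last = j
  have hcount : ∀ (i : Fin γ) (j : Fin n),
      (S.filter fun σ => σ i = j).card = (S.filter fun σ => σ Last = j).card := by
    intro i j
    apply Finset.card_bij' (fun σ _ => σ ∘ Equiv.swap i Last) (fun σ _ => σ ∘ Equiv.swap i Last)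
    · intro σ hσ
      simp only [Finset.mem_filter, hS, Finset.mem_univ, true_and] at hσ ⊢
      refine ⟨fun j' => ?_, ?_⟩
      · exact (fiber_card_comp σ (Equiv.swap i Last) j').trans (hσ.1 j')
      · simpa [Function.comp, Equiv.swap_apply_right] using hσ.2
    · intro σ hσ
      simp only [Finset.mem_filter, hS, Finset.mem_univ, true_and] at hσ ⊢
      refine ⟨fun j' => ?_, ?_⟩
      · exact (fiber_card_comp σ (Equiv.swap i Last) j').trans (hσ.1 j')
      · simpa [Function.comp, Equiv.swap_apply_left] using hσ.2
    · intro σ _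
      funext x
      simp [Function.comp]
    · intro σ _
      funext x
      simp [Function.comp]
  -- double counting: γ * A j = m j * N
  have claim1 : ∀ j : Fin n,
      γ * (S.filter fun σ => σ Last = j).card = m j * S.card := by
    intro j
    have h1 : ∑ σ ∈ S, (Finset.univ.filter (fun i => σ i = j)).card = m j * S.card := by
      have hval : ∀ σ ∈ S, (Finset.univ.filter (fun i => σ i = j)).card = m j := by
        intro σ hσ
        simp only [hS, Finset.mem_filter, Finset.mem_univ, true_and] at hσ
        exact hσ j
      rw [Finset.sum_congr rfl hval, Finset.sum_const, smul_eq_mul, mul_comm]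
    have h2 : ∑ σ ∈ S, (Finset.univ.filter (fun i => σ i = j)).card
        = γ * (S.filter fun σ => σ Last = j).card := by
      simp only [Finset.card_filter]
      rw [Finset.sum_comm]
      have hin : ∀ i : Fin γ, (∑ σ ∈ S, if σ i = j then 1 else 0)
          = (S.filter fun σ => σ Last = j).card := by
        intro i
        rw [← Finset.card_filter, hcount i j]
      rw [Finset.sum_congr rfl (fun i _ => hin i), Finset.sum_const, Finset.card_univ,
        Fintype.card_fin, smul_eq_mul]
      congr 1
      rw [Finset.card_filter]
    exact h2.symm.trans h1
  -- partition of S by the value at Last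
  have claim2 : S.card = ∑ j : Fin n, (S.filter fun σ => σ Last = j).card :=
    Finset.card_eq_sum_card_fiberwise (fun σ _ => Finset.mem_univ (σ Last))
  -- now compute
  unfold mperm
  rw [show (Finset.univ.filter
      (fun σ : Fin γ → Fin n => ∀ j, (Finset.univ.filter (fun i => σ i = j)).card = m j)) = S
    from rfl]
  rw [show (∑ j : Fin n, ((m j : ℚ))) = (γ : ℚ) from by rw [hγdef]; push_cast; rfl]
  calc (∑ σ ∈ S, ∏ i, (fun (i : Fin γ) (j : Fin n) =>
          if i.val = γ - 1 ∧ m j = m k then (1 : ℚ) - q else 1) i (σ i))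
      = ∑ σ ∈ S, (if m (σ Last) = m k then (1 : ℚ) - q else 1) :=
        Finset.sum_congr rfl (fun σ _ => hprod σ)
    _ = ∑ j : Fin n, ∑ σ ∈ S.filter (fun σ => σ Last = j),
          (if m (σ Last) = m k then (1 : ℚ) - q else 1) :=
        (Finset.sum_fiberwise S (fun σ => σ Last)
          (fun σ => if m (σ Last) = m k then (1 : ℚ) - q else 1)).symm
    _ = ∑ j : Fin n, ((S.filter fun σ => σ Last = j).card : ℚ)
          * (if m j = m k then (1 : ℚ) - q else 1) := by
        refine Finset.sum_congr rfl (fun j _ => ?_)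
        have hval : ∀ σ ∈ S.filter (fun σ => σ Last = j),
            (if m (σ Last) = m k then (1 : ℚ) - q else 1)
              = (if m j = m k then (1 : ℚ) - q else 1) := by
          intro σ hσ
          rw [(Finset.mem_filter.mp hσ).2]
        rw [Finset.sum_congr rfl hval, Finset.sum_const, nsmul_eq_mul]
    _ = 0 := by
        set A : Fin n → ℚ := fun j => ((S.filter fun σ => σ Last = j).card : ℚ) with hA
        have hγQ : (γ : ℚ) ≠ 0 := Nat.cast_ne_zero.mpr hγpos.ne'
        have hcQ : (C.card : ℚ) ≠ 0 := Nat.cast_ne_zero.mpr hCpos.ne'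
        have hmkQ : ((m k : ℚ)) ≠ 0 := Nat.cast_ne_zero.mpr hmk.ne'
        have hSC : (γ : ℚ) * (∑ j ∈ C, A j) = (C.card : ℚ) * (m k : ℚ) * (S.card : ℚ) := by
          rw [Finset.mul_sum]
          have hval : ∀ j ∈ C, (γ : ℚ) * A j = (m k : ℚ) * (S.card : ℚ) := by
            intro j hj
            have hj' : m j = m k := (Finset.mem_filter.mp hj).2
            have h1 : (γ : ℚ) * A j = (m j : ℚ) * (S.card : ℚ) := by
              simp only [hA]
              exact_mod_cast claim1 j
            rw [h1, hj']
          rw [Finset.sum_congr rfl hval, Finset.sum_const, nsmul_eq_mul]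
          ring
        have hqSC : (∑ j ∈ C, A j) * q = (S.card : ℚ) := by
          have hrw : (∑ j ∈ C, A j) * q
              = ((γ : ℚ) * (∑ j ∈ C, A j)) / ((C.card : ℚ) * (m k : ℚ)) := by
            rw [hq]; ring
          rw [hrw, hSC, mul_div_cancel_left₀ _ (mul_ne_zero hcQ hmkQ)]
        have htot : (∑ j ∈ C, A j)
            + (∑ j ∈ Finset.univ.filter (fun j : Fin n => ¬ m j = m k), A j)
            = (S.card : ℚ) := by
          have hsum : (∑ j ∈ C, A j)
              + (∑ j ∈ Finset.univ.filter (fun j : Fin n => ¬ m j = m k), A j)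
              = ∑ j : Fin n, A j := by
            rw [hC, Finset.sum_filter_add_sum_filter_not]
          rw [hsum, claim2]
          push_cast
          rfl
        have hsplit := Finset.sum_filter_add_sum_filter_not Finset.univ
          (fun j : Fin n => m j = m k)
          (fun j => A j * (if m j = m k then (1 : ℚ) - q else 1))
        rw [← hsplit]
        have h1 : ∑ j ∈ Finset.univ.filter (fun j : Fin n => m j = m k),
            A j * (if m j = m k then (1 : ℚ) - q else 1)
            = (∑ j ∈ C, A j) * (1 - q) := by
          rw [Finset.sum_mul, hC]
          refine Finset.sum_congr rfl (fun j hj => ?_)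
          rw [if_pos (Finset.mem_filter.mp hj).2]
        have h2 : ∑ j ∈ Finset.univ.filter (fun j : Fin n => ¬ m j = m k),
            A j * (if m j = m k then (1 : ℚ) - q else 1)
            = ∑ j ∈ Finset.univ.filter (fun j : Fin n => ¬ m j = m k), A j := by
          refine Finset.sum_congr rfl (fun j hj => ?_)
          rw [if_neg (Finset.mem_filter.mp hj).2, mul_one]
        rw [h1, h2]
        linear_combination htot - hqSC
end

section
/- For i ≠ i' in [γ] and j, j' in [n], the second partial derivative of mperm_m with respect to x_{i,j} and x_{i',j'}, evaluated at a matrix X, equals mperm_{m - e_j - e_{j'}}(X_{ii'}), where X_{ii'} is X with rows i and i' removed; and the second partial with respect to x_{i,j} and x_{i,j'} (same row i) is identically zero. -/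
/-- The multipermanent as a polynomial in the `γ·n` variables `x_{i,j}`. -/
noncomputable def mpermPoly (γ n : ℕ) (m : Fin n → ℕ) : MvPolynomial (Fin γ × Fin n) ℚ :=
  ∑ σ ∈ Finset.univ.filter
      (fun σ : Fin γ → Fin n => ∀ j, (Finset.univ.filter (fun i => σ i = j)).card = m j),
    ∏ i, MvPolynomial.X (i, σ i)

lemma pderiv_prod_X {ι σ' : Type*} [DecidableEq ι] [DecidableEq σ']
    (q : σ') (s : Finset ι) (f : ι → σ') :
    MvPolynomial.pderiv q (∏ k ∈ s, (MvPolynomial.X (f k) : MvPolynomial σ' ℚ)) =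
      ∑ k ∈ s.filter (fun k => f k = q), ∏ k' ∈ s.erase k, MvPolynomial.X (f k') := by
  induction s using Finset.induction with
  | empty => simp
  | @insert a s ha ih =>
    rw [Finset.prod_insert ha, MvPolynomial.pderiv_mul, ih, Finset.filter_insert,
      Finset.mul_sum]
    have hsum : ∀ k ∈ s.filter (fun k => f k = q),
        (MvPolynomial.X (f a) : MvPolynomial σ' ℚ) * ∏ k' ∈ s.erase k, MvPolynomial.X (f k')
          = ∏ k' ∈ (insert a s).erase k, MvPolynomial.X (f k') := by
      intro k hk
      obtain ⟨hks, _⟩ := Finset.mem_filter.mp hk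
      have hak : k ≠ a := fun h => ha (h ▸ hks)
      rw [Finset.erase_insert_of_ne hak.symm,
        Finset.prod_insert (fun h => ha (Finset.mem_of_mem_erase h))]
    by_cases h : f a = q
    · rw [if_pos h, Finset.sum_insert (by simp [ha]), Finset.erase_insert ha,
        show MvPolynomial.pderiv q (MvPolynomial.X (f a) : MvPolynomial σ' ℚ) = 1 from by
          rw [h, MvPolynomial.pderiv_X_self], one_mul]
      exact congrArg _ (Finset.sum_congr rfl hsum)
    · rw [if_neg h, MvPolynomial.pderiv_X_of_ne h, zero_mul, zero_add]
      exact Finset.sum_congr rfl hsum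

lemma pderiv_sum_prod {N n : ℕ} (S : Finset (Fin N → Fin n)) (s : Finset (Fin N))
    (i : Fin N) (hi : i ∈ s) (j : Fin n) :
    MvPolynomial.pderiv (i, j) (∑ σ ∈ S, ∏ k ∈ s,
        (MvPolynomial.X (k, σ k) : MvPolynomial (Fin N × Fin n) ℚ)) =
      ∑ σ ∈ S.filter (fun σ => σ i = j), ∏ k ∈ s.erase i, MvPolynomial.X (k, σ k) := by
  rw [map_sum, Finset.sum_filter]
  refine Finset.sum_congr rfl fun σ _ => ?_
  rw [pderiv_prod_X]
  have hfil : s.filter (fun k => ((k, σ k) : Fin N × Fin n) = (i, j)) =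
      if σ i = j then {i} else ∅ := by
    ext k
    simp only [Finset.mem_filter, Prod.mk.injEq]
    by_cases h : σ i = j
    · simp only [if_pos h, Finset.mem_singleton]
      constructor
      · rintro ⟨_, rfl, _⟩; rfl
      · rintro rfl; exact ⟨hi, rfl, h⟩
    · simp only [if_neg h, Finset.notMem_empty, iff_false]
      rintro ⟨_, rfl, hkj⟩; exact h hkj
  rw [hfil]
  by_cases h : σ i = j
  · rw [if_pos h, Finset.sum_singleton, if_pos h]
  · rw [if_neg h, Finset.sum_empty, if_neg h]

lemma pderiv_sum_prod_zero {N n : ℕ} (S : Finset (Fin N → Fin n)) (s : Finset (Fin N))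
    (i : Fin N) (hi : i ∉ s) (j : Fin n) :
    MvPolynomial.pderiv (i, j) (∑ σ ∈ S, ∏ k ∈ s,
        (MvPolynomial.X (k, σ k) : MvPolynomial (Fin N × Fin n) ℚ)) = 0 := by
  rw [map_sum]
  refine Finset.sum_eq_zero fun σ _ => ?_
  rw [pderiv_prod_X]
  have : s.filter (fun k => ((k, σ k) : Fin N × Fin n) = (i, j)) = ∅ := by
    refine Finset.filter_eq_empty_iff.mpr fun {k} hk h => ?_
    cases h; exact hi hk
  rw [this, Finset.sum_empty]

/-- Second partial derivatives of the multipermanent: for `i ≠ i'` (with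
`i' = i.succAbove p`) the second partial with respect to `x_{i,j}` and
`x_{i',j'}`, evaluated at `X`, is `mperm_{m - e_j - e_{j'}}` of `X` with rows
`i` and `i'` removed; and the second partial with respect to two variables in
the same row `i` is identically zero. -/
theorem mperm_pderiv_two (γ n : ℕ) (m : Fin n → ℕ) (hγ : γ + 2 = ∑ j, m j)
    (X : Fin (γ + 2) → Fin n → ℚ) (i i' : Fin (γ + 2)) (hii' : i ≠ i')
    (p : Fin (γ + 1)) (hp : i' = i.succAbove p) (j j' : Fin n) :
    (MvPolynomial.eval (fun q : Fin (γ + 2) × Fin n => X q.1 q.2)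
        (MvPolynomial.pderiv (i', j')
          (MvPolynomial.pderiv (i, j) (mpermPoly (γ + 2) n m))) =
      mperm (fun k => m k - (if k = j then 1 else 0) - if k = j' then 1 else 0)
        (fun (r : Fin γ) c => X (i.succAbove (p.succAbove r)) c)) ∧
    MvPolynomial.pderiv (i, j') (MvPolynomial.pderiv (i, j) (mpermPoly (γ + 2) n m)) = 0 := by
  classical
  have hi'ne : i' ≠ i := hii'.symm
  set S : Finset (Fin (γ + 2) → Fin n) := Finset.univ.filter
      (fun σ : Fin (γ + 2) → Fin n =>
        ∀ k, (Finset.univ.filter (fun x => σ x = k)).card = m k) with hS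
  have hd1 : MvPolynomial.pderiv (i, j) (mpermPoly (γ + 2) n m) =
      ∑ σ ∈ S.filter (fun σ => σ i = j),
        ∏ k ∈ Finset.univ.erase i, MvPolynomial.X (k, σ k) := by
    rw [mpermPoly]
    exact pderiv_sum_prod _ _ i (Finset.mem_univ i) j
  constructor
  · -- the main computation
    subst hp
    have hi'mem : i.succAbove p ∈ Finset.univ.erase i :=
      Finset.mem_erase.mpr ⟨hi'ne, Finset.mem_univ _⟩
    rw [hd1, pderiv_sum_prod _ _ _ hi'mem j', map_sum]
    simp only [map_prod, MvPolynomial.eval_X]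
    rw [mperm]
    set e : Fin γ → Fin (γ + 2) := fun r => i.succAbove (p.succAbove r) with he
    have he_inj : Function.Injective e := fun a b h =>
      Fin.succAbove_right_injective (Fin.succAbove_right_injective h)
    have himg : Finset.univ.image e = (Finset.univ.erase i).erase (i.succAbove p) := by
      apply Finset.eq_of_subset_of_card_le
      · intro x hx
        obtain ⟨r, _, rfl⟩ := Finset.mem_image.mp hx
        refine Finset.mem_erase.mpr ⟨fun h => Fin.succAbove_ne p r ?_,
          Finset.mem_erase.mpr ⟨Fin.succAbove_ne i _, Finset.mem_univ _⟩⟩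
        exact Fin.succAbove_right_injective h
      · rw [Finset.card_erase_of_mem hi'mem, Finset.card_erase_of_mem (Finset.mem_univ i),
          Finset.card_image_of_injective _ he_inj]
        simp
    -- forward counting
    have hcntF : ∀ σ : Fin (γ + 2) → Fin n, σ i = j → σ (i.succAbove p) = j' → ∀ k,
        (Finset.univ.filter (fun r => σ (e r) = k)).card
          = (Finset.univ.filter (fun x => σ x = k)).card
            - (if k = j then 1 else 0) - (if k = j' then 1 else 0) := by
      intro σ hj hj' k
      have h1 : (Finset.univ.filter (fun r => σ (e r) = k)).card
          = (((Finset.univ.filter (fun x => σ x = k)).erase i).erase (i.succAbove p)).card := by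
        rw [← Finset.card_image_of_injective _ he_inj]
        have h2 : ((Finset.image e Finset.univ).filter (fun x => σ x = k))
            = Finset.image e (Finset.filter (fun r => σ (e r) = k) Finset.univ) :=
          Finset.filter_image
        rw [← h2, himg, Finset.filter_erase, Finset.filter_erase]
      rw [h1]
      have hiA : i ∈ Finset.univ.filter (fun x => σ x = k) ↔ k = j := by
        simp [hj, eq_comm]
      have hi'A : i.succAbove p ∈ (Finset.univ.filter (fun x => σ x = k)).erase i ↔ k = j' := by
        simp [hj', hi'ne, eq_comm]
      have c1 : (((Finset.univ.filter (fun x => σ x = k)).erase i).erase (i.succAbove p)).card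
          = ((Finset.univ.filter (fun x => σ x = k)).erase i).card
            - (if k = j' then 1 else 0) := by
        by_cases hkj' : k = j'
        · rw [Finset.card_erase_of_mem (hi'A.mpr hkj'), if_pos hkj']
        · rw [Finset.erase_eq_of_notMem (fun h => hkj' (hi'A.mp h)), if_neg hkj',
            Nat.sub_zero]
      have c2 : ((Finset.univ.filter (fun x => σ x = k)).erase i).card
          = (Finset.univ.filter (fun x => σ x = k)).card - (if k = j then 1 else 0) := by
        by_cases hkj : k = j
        · rw [Finset.card_erase_of_mem (hiA.mpr hkj), if_pos hkj]
        · rw [Finset.erase_eq_of_notMem (fun h => hkj (hiA.mp h)), if_neg hkj, Nat.sub_zero]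
      rw [c1, c2]
    -- backward counting
    have hcntG : ∀ τ : Fin γ → Fin n,
        (∀ k, (Finset.univ.filter (fun x => τ x = k)).card
          = m k - (if k = j then 1 else 0) - (if k = j' then 1 else 0)) →
        ∀ k, (Finset.univ.filter
            (fun x => (i.insertNth j (p.insertNth j' τ)) x = k)).card = m k := by
      intro τ hτ
      set σ : Fin (γ + 2) → Fin n := i.insertNth j (p.insertNth j' τ) with hσ
      have hformula : ∀ k, (Finset.univ.filter (fun x => σ x = k)).card
          = (if j = k then 1 else 0) + ((if j' = k then 1 else 0)
            + (Finset.univ.filter (fun x => τ x = k)).card) := by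
        intro k
        rw [Finset.card_filter, Finset.card_filter,
          Fin.sum_univ_succAbove (fun x => if σ x = k then 1 else 0) i]
        simp only [hσ, Fin.insertNth_apply_same, Fin.insertNth_apply_succAbove]
        rw [Fin.sum_univ_succAbove
          (fun q => if (p.insertNth j' τ : Fin (γ + 1) → Fin n) q = k then 1 else 0) p]
        simp only [Fin.insertNth_apply_same, Fin.insertNth_apply_succAbove]
      have hsum2 : ∑ k, (Finset.univ.filter (fun x => σ x = k)).card = γ + 2 := by
        simp only [Finset.card_filter]
        rw [Finset.sum_comm]
        simp
      have hle : ∀ k, m k ≤ (Finset.univ.filter (fun x => σ x = k)).card := by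
        intro k
        rw [hformula k, hτ k]
        by_cases h1 : k = j
        · subst h1
          by_cases h2 : k = j'
          · subst h2; simp <;> omega
          · simp [h2, Ne.symm h2] <;> omega
        · by_cases h2 : k = j'
          · subst h2; simp [h1, Ne.symm h1] <;> omega
          · simp [h1, h2, Ne.symm h1, Ne.symm h2] <;> omega
      have hsums : ∑ k, m k = ∑ k, (Finset.univ.filter (fun x => σ x = k)).card := by
        rw [hsum2, ← hγ]
      have := (Finset.sum_eq_sum_iff_of_le (fun k _ => hle k)).mp hsums
      exact fun k => (this k (Finset.mem_univ k)).symm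
    -- the bijection
    refine Finset.sum_nbij' (fun σ r => σ (e r))
      (fun τ => i.insertNth j (p.insertNth j' τ)) ?_ ?_ ?_ ?_ ?_
    · intro σ hσ
      obtain ⟨h1, hij'⟩ := Finset.mem_filter.mp hσ
      obtain ⟨h2, hij⟩ := Finset.mem_filter.mp h1
      obtain ⟨-, hcnt⟩ := Finset.mem_filter.mp h2
      refine Finset.mem_filter.mpr ⟨Finset.mem_univ _, fun k => ?_⟩
      rw [hcntF σ hij hij' k, hcnt k]
    · intro τ hτ
      obtain ⟨-, hcnt⟩ := Finset.mem_filter.mp hτ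
      refine Finset.mem_filter.mpr ⟨Finset.mem_filter.mpr ⟨Finset.mem_filter.mpr
        ⟨Finset.mem_univ _, hcntG τ hcnt⟩, ?_⟩, ?_⟩
      · beta_reduce
        rw [Fin.insertNth_apply_same]
      · beta_reduce
        rw [Fin.insertNth_apply_succAbove, Fin.insertNth_apply_same]
    · intro σ hσ
      obtain ⟨h1, hij'⟩ := Finset.mem_filter.mp hσ
      obtain ⟨-, hij⟩ := Finset.mem_filter.mp h1
      funext k
      beta_reduce
      rcases eq_or_ne k i with rfl | hk
      · rw [Fin.insertNth_apply_same]; exact hij.symm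
      · obtain ⟨q, rfl⟩ := Fin.exists_succAbove_eq hk
        rw [Fin.insertNth_apply_succAbove]
        rcases eq_or_ne q p with rfl | hq
        · rw [Fin.insertNth_apply_same]; exact hij'.symm
        · obtain ⟨r, rfl⟩ := Fin.exists_succAbove_eq hq
          rw [Fin.insertNth_apply_succAbove]
    · intro τ hτ
      funext r
      beta_reduce
      simp only [he, Fin.insertNth_apply_succAbove]
    · intro σ hσ
      rw [← himg, Finset.prod_image (fun a _ b _ h => he_inj h)]
  · rw [hd1]
    exact pderiv_sum_prod_zero _ _ i (Finset.notMem_erase i _) j'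
end

section
/- Let k be a field, f ∈ k[x_1,…,x_m] a polynomial, and F: k^m → M_n(k) an affine-linear map with f = det ∘ F. If y ∈ k^m satisfies f(y) = 0, then the Hessian matrix of f at y, namely (∂²f/∂x_h∂x_e (y))_{h,e}, factors as L · H_det(F(y)) · Lᵗ for some m×n² matrix L, where H_det(F(y)) is the Hessian of the n×n determinant polynomial at the singular matrix F(y); in particular rank(Hessian of f at y) ≤ rank(Hessian of det_n at F(y)). -/
open MvPolynomial Matrix

/-- The determinant of the generic `n × n` matrix, as a polynomial in the `n²`
variables `z_{i,j}`. -/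
noncomputable def detPoly (k : Type*) [CommRing k] (n : ℕ) : MvPolynomial (Fin n × Fin n) k :=
  (Matrix.of fun i j : Fin n => (X (i, j) : MvPolynomial (Fin n × Fin n) k)).det

/-- The Hessian matrix of a multivariate polynomial at a point. -/
noncomputable def hessianAt {k : Type*} [CommRing k] {ι : Type*}
    (f : MvPolynomial ι k) (y : ι → k) : Matrix ι ι k :=
  Matrix.of fun a b => eval y (pderiv a (pderiv b f))

section Aux

variable {k : Type*} [CommRing k] {σ τ : Type*} [Fintype σ] [DecidableEq σ] [DecidableEq τ]

/-- Chain rule for `pderiv` along `aeval`. -/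
lemma pderiv_aeval_chain (g : σ → MvPolynomial τ k) (e : τ) (p : MvPolynomial σ k) :
    pderiv e (aeval g p) = ∑ q, aeval g (pderiv q p) * pderiv e (g q) := by
  induction p using MvPolynomial.induction_on with
  | C a => simp
  | add p q hp hq =>
      rw [map_add, map_add, hp, hq, ← Finset.sum_add_distrib]
      exact Finset.sum_congr rfl fun r _ => by simp [add_mul]
  | mul_X p i hp =>
      have h1 : (aeval g) (p * X i) = aeval g p * g i := by
        rw [_root_.map_mul, aeval_X]
      rw [h1, pderiv_mul, hp, Finset.sum_mul]
      have hterm : ∀ q : σ, aeval g (pderiv q (p * X i)) * pderiv e (g q)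
          = aeval g (pderiv q p) * pderiv e (g q) * g i
            + (if q = i then aeval g p * pderiv e (g i) else 0) := by
        intro q
        rw [pderiv_mul, map_add, _root_.map_mul, _root_.map_mul, aeval_X]
        by_cases hq : q = i
        · subst hq
          rw [pderiv_X_self, _root_.map_one, mul_one, if_pos rfl]
          ring
        · rw [pderiv_X_of_ne (Ne.symm hq), if_neg hq]
          simp only [map_zero, mul_zero, add_zero]
          ring
      rw [Finset.sum_congr rfl fun q _ => hterm q, Finset.sum_add_distrib,
        Finset.sum_ite_eq' Finset.univ i fun _ => aeval g p * pderiv e (g i)]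
      simp only [Finset.mem_univ, if_true]

/-- Second partial derivatives of a polynomial of total degree at most 1 vanish. -/
lemma pderiv_pderiv_eq_zero {p : MvPolynomial τ k} (hp : p.totalDegree ≤ 1) (h e : τ) :
    pderiv h (pderiv e p) = 0 := by
  rw [p.as_sum, map_sum, map_sum]
  refine Finset.sum_eq_zero fun s hs => ?_
  rw [pderiv_monomial, pderiv_monomial]
  have hsum : Finsupp.degree s ≤ 1 := le_trans (le_totalDegree hs) hp
  rcases Nat.eq_zero_or_pos (s e) with h0 | h1
  · simp [h0]
  · have hle : Finsupp.single e 1 ≤ s := Finsupp.single_le_iff.mpr h1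
    have hadd : (s - Finsupp.single e 1) + Finsupp.single e 1 = s :=
      tsub_add_cancel_of_le hle
    have hdegadd : ∀ a b : τ →₀ ℕ,
        Finsupp.degree (a + b) = Finsupp.degree a + Finsupp.degree b := by
      intro a b
      simp [Finsupp.degree_eq_weight_one, map_add]
    have hdegs : Finsupp.degree (Finsupp.single e 1) = 1 := by
      simp [Finsupp.degree_eq_weight_one, Finsupp.weight_apply, Finsupp.sum_single_index]
    have hdeg : Finsupp.degree (s - Finsupp.single e 1) = 0 := by
      have h2 := congrArg Finsupp.degree hadd
      rw [hdegadd, hdegs] at h2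
      omega
    have hz : ((s - Finsupp.single e 1) : τ →₀ ℕ) h = 0 := by
      have := Finsupp.le_degree h ((s - Finsupp.single e 1) : τ →₀ ℕ)
      omega
    simp [hz]

end Aux

/-- If `F` is an `n × n` matrix of affine-linear forms in `x_1, …, x_m` with
`det ∘ F = f` and `f(y) = 0`, then the Hessian of `f` at `y` factors as
`L · H · Lᵀ` where `H` is the Hessian of `det_n` at the singular matrix `F(y)`;
in particular its rank is at most the rank of `H`. -/
theorem hessian_factorization (k : Type*) [Field k] (m n : ℕ)
    (f : MvPolynomial (Fin m) k) (F : Fin n → Fin n → MvPolynomial (Fin m) k)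
    (hdeg : ∀ i j, (F i j).totalDegree ≤ 1)
    (hf : (Matrix.of F).det = f)
    (y : Fin m → k) (hy : eval y f = 0) :
    (∃ L : Matrix (Fin m) (Fin n × Fin n) k,
        hessianAt f y =
          L * hessianAt (detPoly k n) (fun q : Fin n × Fin n => eval y (F q.1 q.2)) * Lᵀ) ∧
      (hessianAt f y).rank ≤
        (hessianAt (detPoly k n) (fun q : Fin n × Fin n => eval y (F q.1 q.2))).rank := by
  classical
  set g : Fin n × Fin n → MvPolynomial (Fin m) k := fun q => F q.1 q.2 with hg
  set z : Fin n × Fin n → k := fun q => eval y (g q) with hz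
  set D := detPoly k n with hD
  -- f is the composition of detPoly with g
  have hcomp : aeval g D = f := by
    rw [← hf, hD, detPoly, AlgHom.map_det]
    congr 1
    ext i j
    simp [g]
  set L : Matrix (Fin m) (Fin n × Fin n) k :=
    Matrix.of fun h q => eval y (pderiv h (g q)) with hL
  have key : hessianAt f y = L * hessianAt D z * Lᵀ := by
    ext h e
    have step1 : pderiv e f = ∑ q, aeval g (pderiv q D) * pderiv e (g q) := by
      rw [← hcomp, pderiv_aeval_chain]
    have step2 : pderiv h (pderiv e f) =
        ∑ q, ∑ r, aeval g (pderiv r (pderiv q D)) * pderiv h (g r) * pderiv e (g q) := by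
      rw [step1, map_sum]
      refine Finset.sum_congr rfl fun q _ => ?_
      rw [pderiv_mul, pderiv_aeval_chain,
        pderiv_pderiv_eq_zero (hdeg q.1 q.2) h e, mul_zero, add_zero, Finset.sum_mul]
    have heval : ∀ P : MvPolynomial (Fin n × Fin n) k,
        eval y (aeval g P) = eval z P := by
      intro P
      rw [aeval_def, eval₂_comp_left (eval y)]
      congr 1
      ext a
      simp
    show eval y (pderiv h (pderiv e f)) = (L * hessianAt D z * Lᵀ) h e
    rw [step2, map_sum, Matrix.mul_apply]
    refine Finset.sum_congr rfl fun q _ => ?_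
    rw [map_sum, Matrix.mul_apply, Finset.sum_mul]
    refine Finset.sum_congr rfl fun r _ => ?_
    rw [_root_.map_mul, _root_.map_mul, heval]
    simp only [hessianAt, hL, Matrix.of_apply, Matrix.transpose_apply]
    ring
  refine ⟨⟨L, key⟩, ?_⟩
  rw [key]
  exact le_trans (Matrix.rank_mul_le_left _ _) (Matrix.rank_mul_le_right _ _)
end

section
/- Let k be a field of characteristic zero and A a singular n×n matrix over k. Then the Hessian matrix of the determinant polynomial det_n (in n² variables), evaluated at A, has rank at most 2n. -/
open MvPolynomial Matrix

section Aux

/-- First-order Taylor data for a multivariate polynomial substituted along a line. -/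
lemma MR.taylor1 {R : Type*} [CommRing R] {ι : Type*} [Fintype ι] [DecidableEq ι]
    (f : MvPolynomial ι R) (a v : ι → R) :
    ((MvPolynomial.eval (fun i => (Polynomial.C (a i) + Polynomial.X * Polynomial.C (v i)))
        (MvPolynomial.map Polynomial.C f)).coeff 0 = MvPolynomial.eval a f) ∧
    ((MvPolynomial.eval (fun i => (Polynomial.C (a i) + Polynomial.X * Polynomial.C (v i)))
        (MvPolynomial.map Polynomial.C f)).coeff 1
      = ∑ p, v p * MvPolynomial.eval a (MvPolynomial.pderiv p f)) := by
  induction f using MvPolynomial.induction_on with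
  | C r => simp [pderiv_C]
  | add f g hf hg =>
      simp only [map_add, Polynomial.coeff_add, hf.1, hf.2, hg.1, hg.2]
      constructor
      · trivial
      · rw [← Finset.sum_add_distrib]
        simp [mul_add]
  | mul_X f p hf =>
      have hmap : MvPolynomial.map (Polynomial.C (R := R)) (f * X p)
          = MvPolynomial.map Polynomial.C f * X p := by simp
      set Φ : ι → Polynomial R := fun i => Polynomial.C (a i) + Polynomial.X * Polynomial.C (v i)
        with hΦ
      set E := MvPolynomial.eval Φ (MvPolynomial.map Polynomial.C f) with hE
      have heval : MvPolynomial.eval Φ (MvPolynomial.map Polynomial.C (f * X p))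
          = E * Polynomial.C (a p) + (E * Polynomial.X) * Polynomial.C (v p) := by
        rw [hmap, _root_.map_mul, MvPolynomial.eval_X]
        ring
      have hc0 : (E * Polynomial.C (a p) + (E * Polynomial.X) * Polynomial.C (v p)).coeff 0
          = E.coeff 0 * a p := by
        simp [Polynomial.coeff_mul_C, Polynomial.coeff_mul_X_zero]
      have hc1 : (E * Polynomial.C (a p) + (E * Polynomial.X) * Polynomial.C (v p)).coeff 1
          = E.coeff 1 * a p + E.coeff 0 * v p := by
        simp [Polynomial.coeff_mul_C, Polynomial.coeff_mul_X]
      constructor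
      · rw [heval, hc0, hf.1, MvPolynomial.eval_mul, MvPolynomial.eval_X]
      · rw [heval, hc1, hf.1, hf.2]
        have : ∀ q : ι, v q * MvPolynomial.eval a (pderiv q (f * X p))
            = (v q * MvPolynomial.eval a (pderiv q f)) * a p
              + v q * (MvPolynomial.eval a f * (if p = q then 1 else 0)) := by
          intro q
          rw [pderiv_mul, pderiv_X]
          simp only [map_add, MvPolynomial.eval_mul, MvPolynomial.eval_X]
          have : MvPolynomial.eval a (Pi.single (M := fun _ => MvPolynomial ι R) q 1 p)
              = (if p = q then 1 else 0) := by
            rcases eq_or_ne p q with h | h <;> simp [h, Pi.single_apply]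
          rw [this]; ring
        rw [Finset.sum_congr rfl (fun q _ => this q), Finset.sum_add_distrib, ← Finset.sum_mul]
        simp [Finset.sum_ite_eq, mul_comm]

/-- Mixed partial derivatives commute. -/
lemma MR.pderiv_comm {R : Type*} [CommRing R] {ι : Type*} [DecidableEq ι]
    (i j : ι) (f : MvPolynomial ι R) :
    pderiv i (pderiv j f) = pderiv j (pderiv i f) := by
  induction f using MvPolynomial.induction_on' with
  | monomial s a =>
      simp only [pderiv_monomial]
      rcases eq_or_ne i j with rfl | hij
      · rfl
      · have hidx : s - Finsupp.single j 1 - Finsupp.single i 1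
            = s - Finsupp.single i 1 - Finsupp.single j 1 := by
          ext t
          simp only [Finsupp.tsub_apply, Finsupp.single_apply]
          omega
        have hc1 : ((s - Finsupp.single j 1 : _ →₀ ℕ)) i = s i := by
          simp [Finsupp.tsub_apply, Finsupp.single_apply, hij.symm]
        have hc2 : ((s - Finsupp.single i 1 : _ →₀ ℕ)) j = s j := by
          simp [Finsupp.tsub_apply, Finsupp.single_apply, hij]
        rw [hidx, hc1, hc2]
        ring_nf
  | add f g hf hg => simp [hf, hg]

variable {k : Type*} [CommRing k] {n : ℕ}

lemma MR.eval_map_detPoly {S : Type*} [CommRing S] (φ : k →+* S) (Φ : Fin n × Fin n → S) :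
    MvPolynomial.eval Φ (MvPolynomial.map φ (detPoly k n))
      = (Matrix.of fun i j : Fin n => Φ (i, j)).det := by
  have h := RingHom.map_det ((MvPolynomial.eval Φ).comp (MvPolynomial.map φ))
    (Matrix.of fun i j : Fin n => (MvPolynomial.X (i, j) : MvPolynomial (Fin n × Fin n) k))
  rw [detPoly]
  convert h using 2
  · rfl
  ext i j
  simp

/-- Evaluating the partial derivative of the determinant polynomial gives a cofactor. -/
lemma MR.eval_pderiv_detPoly (B : Matrix (Fin n) (Fin n) k) (p : Fin n × Fin n) :
    MvPolynomial.eval (fun q : Fin n × Fin n => B q.1 q.2) (pderiv p (detPoly k n))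
      = (B.updateRow p.1 (Pi.single p.2 1)).det := by
  classical
  set a : Fin n × Fin n → k := fun q => B q.1 q.2 with ha
  set v : Fin n × Fin n → k := fun q => if q = p then 1 else 0 with hv
  have ht := (MR.taylor1 (detPoly k n) a v).2
  have hsum : (∑ q, v q * MvPolynomial.eval a (pderiv q (detPoly k n)))
      = MvPolynomial.eval a (pderiv p (detPoly k n)) := by
    rw [Finset.sum_eq_single p]
    · simp [hv]
    · intro q _ hq; simp [hv, hq]
    · intro h; exact absurd (Finset.mem_univ p) h
  rw [hsum] at ht
  rw [← ht, MR.eval_map_detPoly]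
  have hmat : (Matrix.of fun i j : Fin n =>
        (Polynomial.C (a (i, j)) + Polynomial.X * Polynomial.C (v (i, j))))
      = (B.map Polynomial.C).updateRow p.1
          ((fun j => Polynomial.C (B p.1 j)) + fun j =>
            Polynomial.X * Polynomial.C (Pi.single p.2 (1 : k) j)) := by
    ext i j
    by_cases hi : i = p.1
    · subst hi
      simp only [Matrix.of_apply, Matrix.updateRow_self, Pi.add_apply]
      congr 1
      rcases eq_or_ne j p.2 with hj | hj
      · subst hj; simp [hv, ha, Prod.ext_iff]
      · simp [hv, ha, Prod.ext_iff, hj, Pi.single_apply]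
    · simp [hv, ha, Matrix.updateRow_ne hi, Prod.ext_iff, hi, Matrix.map_apply]
  rw [hmat, Matrix.det_updateRow_add]
  have h1 : ((B.map Polynomial.C).updateRow p.1 fun j => Polynomial.C (B p.1 j))
      = B.map Polynomial.C := by
    ext i j
    rcases eq_or_ne i p.1 with hi | hi
    · subst hi; simp
    · simp [Matrix.updateRow_ne hi]
  have h2 : ((B.map Polynomial.C).updateRow p.1
        fun j => Polynomial.X * Polynomial.C (Pi.single p.2 (1 : k) j))
      = (B.map Polynomial.C).updateRow p.1
          ((Polynomial.X : Polynomial k) • fun j : Fin n =>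
            Polynomial.C ((Pi.single p.2 1 : Fin n → k) j)) := by
    congr 1
  rw [h1, h2, Matrix.det_updateRow_smul]
  have h3 : ((B.map Polynomial.C).updateRow p.1
        fun j : Fin n => Polynomial.C ((Pi.single p.2 1 : Fin n → k) j))
      = (B.updateRow p.1 (Pi.single p.2 1)).map Polynomial.C := by
    rw [Matrix.map_updateRow]
    rfl
  have hdet : ∀ M : Matrix (Fin n) (Fin n) k, (M.map Polynomial.C).det = Polynomial.C M.det :=
    fun M => by rw [← RingHom.mapMatrix_apply, ← RingHom.map_det]
  rw [h3, hdet, hdet]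
  simp

lemma MR.eval_eval_map {R : Type*} [CommRing R] {ι : Type*}
    (g : MvPolynomial ι R) (a v : ι → R) (t0 : R) :
    Polynomial.eval t0 (MvPolynomial.eval
        (fun i => Polynomial.C (a i) + Polynomial.X * Polynomial.C (v i))
        (MvPolynomial.map Polynomial.C g))
      = MvPolynomial.eval (fun i => a i + t0 * v i) g := by
  rw [MvPolynomial.eval_map]
  have h := MvPolynomial.eval₂_comp_left (Polynomial.evalRingHom t0)
    (Polynomial.C : R →+* Polynomial R)
    (fun i => Polynomial.C (a i) + Polynomial.X * Polynomial.C (v i)) g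
  simp only [Polynomial.coe_evalRingHom] at h
  rw [h]
  have h1 : (Polynomial.evalRingHom t0).comp (Polynomial.C : R →+* Polynomial R)
      = RingHom.id R := by
    ext r; simp
  have h2 : ((fun z => Polynomial.eval t0 z) ∘
      fun i => Polynomial.C (a i) + Polynomial.X * Polynomial.C (v i))
      = fun i => a i + t0 * v i := by
    funext i
    simp only [Function.comp_apply, Polynomial.eval_add, Polynomial.eval_mul,
      Polynomial.eval_C, Polynomial.eval_X]
  rw [h1, h2, MvPolynomial.eval₂_id]

end Aux

section LinAlg

lemma MR.adjugate_eq_zero_aux {k : Type*} [Field k] {n : ℕ} (B : Matrix (Fin n) (Fin n) k)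
    (x z : Fin n → k) (hx : x ≠ 0) (hBx : B *ᵥ x = 0) (hBz : B *ᵥ z = 0)
    (hz : ∀ c : k, z ≠ c • x) :
    adjugate B = 0 := by
  ext i j
  rw [Matrix.adjugate_apply, Matrix.zero_apply]
  refine (Matrix.exists_mulVec_eq_zero_iff).mp ?_
  by_cases hxi : x i = 0
  · refine ⟨x, hx, ?_⟩
    ext l
    rcases eq_or_ne l j with rfl | hl
    · simp [Matrix.mulVec, Matrix.updateRow_self, single_dotProduct, hxi]
    · have := congrFun hBx l
      simpa [Matrix.mulVec, Matrix.updateRow_ne hl] using this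
  · refine ⟨x i • z - z i • x, ?_, ?_⟩
    · intro h
      apply hz (z i / x i)
      have h' : x i • z = z i • x := sub_eq_zero.mp h
      have : z = (x i)⁻¹ • (z i • x) := by
        rw [← h', smul_smul, inv_mul_cancel₀ hxi, one_smul]
      rw [this, smul_smul]
      congr 1
      simp only [Pi.smul_apply, smul_eq_mul]
      field_simp
    · ext l
      rcases eq_or_ne l j with rfl | hl
      · simp only [Matrix.mulVec, Matrix.updateRow_self, single_dotProduct, Pi.zero_apply]
        simp only [Pi.sub_apply, Pi.smul_apply, smul_eq_mul]
        ring
      · have h1 := congrFun hBx l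
        have h2 := congrFun hBz l
        simp only [Matrix.mulVec, Pi.zero_apply] at h1 h2 ⊢
        rw [Matrix.updateRow_ne hl]
        simp only [dotProduct, Pi.sub_apply, Pi.smul_apply, smul_eq_mul, mul_sub]
        rw [Finset.sum_sub_distrib]
        simp only [dotProduct] at h1 h2
        have e1 : ∑ m, B l m * (x i * z m) = x i * ∑ m, B l m * z m := by
          rw [Finset.mul_sum]; congr 1; ext m; ring
        have e2 : ∑ m, B l m * (z i * x m) = z i * ∑ m, B l m * x m := by
          rw [Finset.mul_sum]; congr 1; ext m; ring
        rw [e1, e2, h1, h2]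
        simp

lemma MR.sum_adj_eq_zero {k : Type*} [Field k] {n : ℕ} (B U : Matrix (Fin n) (Fin n) k)
    (x y : Fin n → k) (hx : x ≠ 0) (hy : y ≠ 0)
    (hBx : B *ᵥ x = 0) (hyB : y ᵥ* B = 0)
    (hU : ∑ i, y i * (U *ᵥ x) i = 0) :
    ∑ p : Fin n × Fin n, U p.1 p.2 * adjugate B p.2 p.1 = 0 := by
  by_cases hker : ∃ z, B *ᵥ z = 0 ∧ ∀ c : k, z ≠ c • x
  · obtain ⟨z, hz1, hz2⟩ := hker
    rw [MR.adjugate_eq_zero_aux B x z hx hBx hz1 hz2]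
    simp
  by_cases hcoker : ∃ z, z ᵥ* B = 0 ∧ ∀ c : k, z ≠ c • y
  · obtain ⟨z, hz1, hz2⟩ := hcoker
    have hT : adjugate Bᵀ = 0 :=
      MR.adjugate_eq_zero_aux Bᵀ y z hy
        (by rw [Matrix.mulVec_transpose]; exact hyB)
        (by rw [Matrix.mulVec_transpose]; exact hz1) hz2
    have h0 : adjugate B = 0 := by
      have h := Matrix.adjugate_transpose B
      rw [hT] at h
      have := congrArg Matrix.transpose h
      simpa using this
    rw [h0]; simp
  push_neg at hker hcoker
  have hdet : B.det = 0 := (Matrix.exists_mulVec_eq_zero_iff).mp ⟨x, hx, hBx⟩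
  have hcol : ∀ l : Fin n, ∃ c : k, (fun i => adjugate B i l) = c • x := by
    intro l
    apply hker
    ext i
    have h0 : (B * adjugate B) i l = 0 := by rw [Matrix.mul_adjugate, hdet]; simp
    rw [Matrix.mul_apply] at h0
    simpa [Matrix.mulVec, dotProduct] using h0
  have hrow : ∀ i : Fin n, ∃ r : k, (fun l => adjugate B i l) = r • y := by
    intro i
    apply hcoker
    ext l
    have h0 : (adjugate B * B) i l = 0 := by rw [Matrix.adjugate_mul, hdet]; simp
    rw [Matrix.mul_apply] at h0
    simpa [Matrix.vecMul, dotProduct] using h0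
  obtain ⟨i0, hi0⟩ : ∃ i0, x i0 ≠ 0 := Function.ne_iff.mp hx
  obtain ⟨r, hr⟩ := hrow i0
  have key : ∀ j l, adjugate B j l * x i0 = adjugate B i0 l * x j := by
    intro j l
    obtain ⟨c, hc⟩ := hcol l
    have h1 : adjugate B j l = c * x j := congrFun hc j
    have h2 : adjugate B i0 l = c * x i0 := congrFun hc i0
    rw [h1, h2]; ring
  have hmain : (∑ p : Fin n × Fin n, U p.1 p.2 * adjugate B p.2 p.1) * x i0
      = r * ∑ i, y i * (U *ᵥ x) i := by
    rw [Finset.sum_mul, Fintype.sum_prod_type]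
    have hinner : ∀ a : Fin n, ∑ b : Fin n, U a b * adjugate B b a * x i0
        = r * (y a * (U *ᵥ x) a) := by
      intro a
      have h : ∀ b, U a b * adjugate B b a * x i0 = adjugate B i0 a * (U a b * x b) := by
        intro b
        rw [mul_assoc, key b a]; ring
      rw [Finset.sum_congr rfl (fun b _ => h b), ← Finset.mul_sum]
      have hia : adjugate B i0 a = r * y a := congrFun hr a
      rw [hia, Matrix.mulVec, dotProduct]
      ring
    rw [Finset.sum_congr rfl (fun a _ => hinner a), ← Finset.mul_sum]
  rw [hU, mul_zero] at hmain
  rcases mul_eq_zero.mp hmain with h | h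
  · exact h
  · exact absurd h hi0

end LinAlg

section Main

variable {k : Type*} [Field k] [CharZero k] {n : ℕ}

/-- The key vanishing: the Hessian pairing `H(U, V)` vanishes whenever `V` preserves the
(co)kernel directions and `U` is `y ⊗ x`-orthogonal. -/
lemma MR.hess_sum_eq_zero (A V U : Matrix (Fin n) (Fin n) k)
    (x y : Fin n → k) (hx : x ≠ 0) (hy : y ≠ 0)
    (hAx : A *ᵥ x = 0) (hyA : y ᵥ* A = 0) (hVx : V *ᵥ x = 0) (hyV : y ᵥ* V = 0)
    (hU : ∑ i, y i * (U *ᵥ x) i = 0) :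
    ∑ p : Fin n × Fin n, U p.1 p.2 * (∑ q : Fin n × Fin n, V q.1 q.2 *
      MvPolynomial.eval (fun r : Fin n × Fin n => A r.1 r.2)
        (pderiv q (pderiv p (detPoly k n)))) = 0 := by
  classical
  set a : Fin n × Fin n → k := fun r => A r.1 r.2 with ha
  set v : Fin n × Fin n → k := fun r => V r.1 r.2 with hvdef
  set Q : Polynomial k := ∑ p : Fin n × Fin n, Polynomial.C (U p.1 p.2) *
    MvPolynomial.eval (fun i => Polynomial.C (a i) + Polynomial.X * Polynomial.C (v i))
      (MvPolynomial.map Polynomial.C (pderiv p (detPoly k n))) with hQ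
  have hQcoeff : Q.coeff 1 = ∑ p : Fin n × Fin n, U p.1 p.2 *
      (∑ q : Fin n × Fin n, V q.1 q.2 *
        MvPolynomial.eval a (pderiv q (pderiv p (detPoly k n)))) := by
    rw [hQ, Polynomial.finset_sum_coeff]
    refine Finset.sum_congr rfl fun p _ => ?_
    rw [Polynomial.coeff_C_mul, (MR.taylor1 (pderiv p (detPoly k n)) a v).2]
  have hQeval : ∀ t0 : k, Polynomial.eval t0 Q = 0 := by
    intro t0
    set B : Matrix (Fin n) (Fin n) k := A + t0 • V with hB
    have hab : (fun i => a i + t0 * v i) = fun r : Fin n × Fin n => B r.1 r.2 := by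
      funext r
      simp [hB, Matrix.add_apply, Matrix.smul_apply, smul_eq_mul, ha, hvdef]
    have hev : Polynomial.eval t0 Q
        = ∑ p : Fin n × Fin n, U p.1 p.2 * adjugate B p.2 p.1 := by
      rw [hQ, Polynomial.eval_finset_sum]
      refine Finset.sum_congr rfl fun p _ => ?_
      rw [Polynomial.eval_mul, Polynomial.eval_C, MR.eval_eval_map, hab,
        MR.eval_pderiv_detPoly, ← Matrix.adjugate_apply]
    rw [hev]
    refine MR.sum_adj_eq_zero B U x y hx hy ?_ ?_ hU
    · rw [hB, Matrix.add_mulVec, hAx, Matrix.smul_mulVec, hVx]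
      simp
    · have hsm : y ᵥ* (t0 • V) = t0 • (y ᵥ* V) := by
        ext j
        simp [Matrix.vecMul, dotProduct, Finset.mul_sum, Matrix.smul_apply, mul_assoc,
          mul_left_comm]
      rw [hB, Matrix.vecMul_add, hyA, hsm, hyV]
      simp
  have hQ0 : Q = 0 := by
    apply Polynomial.funext
    intro r
    rw [hQeval r]
    simp
  rw [← hQcoeff, hQ0]
  simp

end Main


lemma MR.sum_ite_pair {k : Type*} [CommRing k] {α : Type*} [Fintype α] [DecidableEq α]
    (p0 p1 : α) (c1 c2 : k) (G : α → k) :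
    ∑ r, ((if r = p0 then c1 else 0) - (if r = p1 then c2 else 0)) * G r
      = c1 * G p0 - c2 * G p1 := by
  have h1 : ∀ r, ((if r = p0 then c1 else 0) - (if r = p1 then c2 else 0)) * G r
      = (if r = p0 then c1 * G r else 0) - (if r = p1 then c2 * G r else 0) := by
    intro r; split_ifs <;> ring
  rw [Finset.sum_congr rfl fun r _ => h1 r, Finset.sum_sub_distrib,
    Finset.sum_ite_eq' Finset.univ p0 (fun r => c1 * G r),
    Finset.sum_ite_eq' Finset.univ p1 (fun r => c2 * G r)]
  simp

/-- (Mignon–Ressayre) In characteristic zero, the Hessian of the determinant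
polynomial at a singular matrix `A` has rank at most `2n`. -/
theorem rank_hessian_det_le (k : Type*) [Field k] [CharZero k] (n : ℕ)
    (A : Matrix (Fin n) (Fin n) k) (hA : A.det = 0) :
    (hessianAt (detPoly k n) (fun q : Fin n × Fin n => A q.1 q.2)).rank ≤ 2 * n := by
  classical
  obtain ⟨x, hx, hAx⟩ : ∃ x, x ≠ 0 ∧ A *ᵥ x = 0 := by
    obtain ⟨w, h1, h2⟩ := (Matrix.exists_mulVec_eq_zero_iff).mpr hA
    exact ⟨w, h1, h2⟩
  obtain ⟨y, hy, hyA⟩ : ∃ y, y ≠ 0 ∧ y ᵥ* A = 0 := by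
    have hAT : Aᵀ.det = 0 := by rw [Matrix.det_transpose]; exact hA
    obtain ⟨w, h1, h2⟩ := (Matrix.exists_mulVec_eq_zero_iff).mpr hAT
    exact ⟨w, h1, by rw [← Matrix.mulVec_transpose]; exact h2⟩
  obtain ⟨i0, hi0⟩ : ∃ i0, y i0 ≠ 0 := Function.ne_iff.mp hy
  obtain ⟨j0, hj0⟩ : ∃ j0, x j0 ≠ 0 := Function.ne_iff.mp hx
  set a : Fin n × Fin n → k := fun q => A q.1 q.2 with ha
  set H : Matrix (Fin n × Fin n) (Fin n × Fin n) k := hessianAt (detPoly k n) a with hH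
  -- Step 1: vanishing of `H *ᵥ w` for suitable `w`.
  have hkernel : ∀ w : (Fin n × Fin n) → k,
      (∀ i, ∑ j, w (i, j) * x j = 0) → (∀ j, ∑ i, y i * w (i, j) = 0) →
      (H *ᵥ w) (i0, j0) = 0 → H *ᵥ w = 0 := by
    intro w hwx hwy hw0
    set V : Matrix (Fin n) (Fin n) k := Matrix.of fun i j => w (i, j) with hV
    have hVx : V *ᵥ x = 0 := by
      ext i
      simpa [Matrix.mulVec, dotProduct, hV] using hwx i
    have hyV : y ᵥ* V = 0 := by
      ext j
      simpa [Matrix.vecMul, dotProduct, hV] using hwy j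
    set S : (Fin n × Fin n) → k := fun p => ∑ q : Fin n × Fin n,
      V q.1 q.2 * MvPolynomial.eval a (pderiv q (pderiv p (detPoly k n))) with hS
    have hHS : ∀ p, (H *ᵥ w) p = S p := by
      intro p
      rw [hS, hH]
      simp only [Matrix.mulVec, dotProduct, hessianAt, Matrix.of_apply]
      refine Finset.sum_congr rfl fun q _ => ?_
      rw [MR.pderiv_comm, mul_comm]
      rfl
    have hrel : ∀ p : Fin n × Fin n, (y i0 * x j0) * S p = (y p.1 * x p.2) * S (i0, j0) := by
      intro p
      set c1 : k := y i0 * x j0 with hc1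
      set c2 : k := y p.1 * x p.2 with hc2
      set U : Matrix (Fin n) (Fin n) k := Matrix.of fun a' b' =>
        (if (a', b') = p then c1 else 0) - (if (a', b') = (i0, j0) then c2 else 0) with hU
      have hUapp : ∀ r : Fin n × Fin n, U r.1 r.2
          = (if r = p then c1 else 0) - (if r = (i0, j0) then c2 else 0) := by
        intro r
        rw [hU]
        simp only [Matrix.of_apply]
      have hUsum : ∑ i, y i * (U *ᵥ x) i = 0 := by
        have hstep : ∑ i, y i * (U *ᵥ x) i
            = ∑ r : Fin n × Fin n,
                ((if r = p then c1 else 0) - (if r = (i0, j0) then c2 else 0))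
                  * (y r.1 * x r.2) := by
          rw [Fintype.sum_prod_type]
          refine Finset.sum_congr rfl fun i _ => ?_
          rw [Matrix.mulVec, dotProduct, Finset.mul_sum]
          refine Finset.sum_congr rfl fun j _ => ?_
          rw [hUapp (i, j)]
          ring
        rw [hstep, MR.sum_ite_pair p (i0, j0) c1 c2 (fun r => y r.1 * x r.2)]
        simp only [hc1, hc2]
        ring
      have hmain := MR.hess_sum_eq_zero A V U x y hx hy hAx hyA hVx hyV hUsum
      have hexp : ∑ p' : Fin n × Fin n, U p'.1 p'.2 * (∑ q : Fin n × Fin n, V q.1 q.2 *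
          MvPolynomial.eval (fun r : Fin n × Fin n => A r.1 r.2)
            (pderiv q (pderiv p' (detPoly k n))))
          = c1 * S p - c2 * S (i0, j0) := by
        have : ∀ p' : Fin n × Fin n, (∑ q : Fin n × Fin n, V q.1 q.2 *
            MvPolynomial.eval (fun r : Fin n × Fin n => A r.1 r.2)
              (pderiv q (pderiv p' (detPoly k n)))) = S p' := by
          intro p'
          rw [hS]
        rw [Finset.sum_congr rfl fun p' _ => by rw [hUapp p', this p']]
        exact MR.sum_ite_pair p (i0, j0) c1 c2 S
      rw [hexp] at hmain
      have := sub_eq_zero.mp hmain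
      rw [this]
    have hS0 : S (i0, j0) = 0 := by rw [← hHS]; exact hw0
    ext p
    rw [hHS p, Pi.zero_apply]
    have := hrel p
    rw [hS0, mul_zero] at this
    rcases mul_eq_zero.mp this with h | h
    · exact absurd h (mul_ne_zero hi0 hj0)
    · exact h
  -- Step 2: the auxiliary linear map `Ψ` and dimension count.
  set M1 : Matrix (Fin n) (Fin n × Fin n) k :=
    Matrix.of fun i q => if q.1 = i then x q.2 else 0 with hM1def
  set M2 : Matrix (Fin n) (Fin n × Fin n) k :=
    Matrix.of fun j q => if q.2 = j then y q.1 else 0 with hM2def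
  have hM1 : ∀ (w : (Fin n × Fin n) → k) i, (M1 *ᵥ w) i = ∑ j, w (i, j) * x j := by
    intro w i
    rw [Matrix.mulVec, dotProduct, Fintype.sum_prod_type]
    rw [Finset.sum_eq_single i]
    · refine Finset.sum_congr rfl fun j _ => ?_
      rw [hM1def]
      simp [mul_comm]
    · intro b _ hb
      rw [hM1def]
      simp [hb]
    · intro h; exact absurd (Finset.mem_univ i) h
  have hM2 : ∀ (w : (Fin n × Fin n) → k) j, (M2 *ᵥ w) j = ∑ i, y i * w (i, j) := by
    intro w j
    rw [Matrix.mulVec, dotProduct, Fintype.sum_prod_type_right]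
    rw [Finset.sum_eq_single j]
    · refine Finset.sum_congr rfl fun i _ => ?_
      rw [hM2def]
      simp [mul_comm]
    · intro b _ hb
      rw [hM2def]
      simp [hb]
    · intro h; exact absurd (Finset.mem_univ j) h
  set Ψ : ((Fin n × Fin n) → k) →ₗ[k] (Fin n → k) × ((Fin n → k) × k) :=
    (M1.mulVecLin).prod ((M2.mulVecLin).prod
      ((LinearMap.proj (i0, j0)).comp H.mulVecLin)) with hΨ
  have hker_le : LinearMap.ker Ψ ≤ LinearMap.ker H.mulVecLin := by
    intro w hw
    rw [LinearMap.mem_ker] at hw ⊢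
    rw [hΨ] at hw
    have h1 : M1 *ᵥ w = 0 := congrArg Prod.fst hw
    have h2 : M2 *ᵥ w = 0 := congrArg Prod.fst (congrArg Prod.snd hw)
    have h3 : (H *ᵥ w) (i0, j0) = 0 := congrArg Prod.snd (congrArg Prod.snd hw)
    rw [Matrix.mulVecLin_apply]
    refine hkernel w (fun i => ?_) (fun j => ?_) h3
    · rw [← hM1 w i, h1]; rfl
    · rw [← hM2 w j, h2]; rfl
  -- the linear functional cutting out the range of `Ψ`
  set φ : ((Fin n → k) × ((Fin n → k) × k)) →ₗ[k] k :=
    { toFun := fun z => (∑ i, y i * z.1 i) - ∑ j, z.2.1 j * x j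
      map_add' := by
        intro z1 z2
        simp only [Prod.fst_add, Prod.snd_add, Pi.add_apply, mul_add, add_mul,
          Finset.sum_add_distrib]
        ring
      map_smul' := by
        intro c z
        simp only [Prod.smul_fst, Prod.smul_snd, Pi.smul_apply, smul_eq_mul,
          RingHom.id_apply]
        rw [mul_sub, Finset.mul_sum, Finset.mul_sum]
        congr 1
        · exact Finset.sum_congr rfl fun i _ => by ring
        · exact Finset.sum_congr rfl fun j _ => by ring } with hφ
  have hrange_le : LinearMap.range Ψ ≤ LinearMap.ker φ := by
    rintro z ⟨w, rfl⟩
    rw [LinearMap.mem_ker, hΨ, hφ]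
    simp only [LinearMap.prod_apply, LinearMap.coe_mk, AddHom.coe_mk, Pi.prod, Function.prod_apply,
      LinearMap.coe_comp, Function.comp_apply, Matrix.mulVecLin_apply]
    have e1 : ∑ i, y i * (M1 *ᵥ w) i = ∑ r : Fin n × Fin n, y r.1 * w r * x r.2 := by
      rw [Fintype.sum_prod_type]
      refine Finset.sum_congr rfl fun i _ => ?_
      rw [hM1 w i, Finset.mul_sum]
      exact Finset.sum_congr rfl fun j _ => by ring
    have e2 : ∑ j, (M2 *ᵥ w) j * x j = ∑ r : Fin n × Fin n, y r.1 * w r * x r.2 := by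
      rw [Fintype.sum_prod_type_right]
      refine Finset.sum_congr rfl fun j _ => ?_
      rw [hM2 w j, Finset.sum_mul]
    rw [e1, e2, sub_self]
  have hsum0 : ∀ z : k, (∑ i, y i * (if i = i0 then z else 0)) = y i0 * z := by
    intro z
    rw [Finset.sum_eq_single i0]
    · simp
    · intro b _ hb; simp [hb]
    · intro h; exact absurd (Finset.mem_univ i0) h
  have hφsurj : Function.Surjective φ := by
    intro c
    refine ⟨(fun i => if i = i0 then c / y i0 else 0, 0, 0), ?_⟩
    have happ : φ (fun i => if i = i0 then c / y i0 else 0, 0, 0)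
        = (∑ i, y i * (if i = i0 then c / y i0 else 0)) - ∑ j, (0 : k) * x j := by
      rw [hφ]
      rfl
    rw [happ, hsum0]
    simp
    field_simp
  have hdimtot : Module.finrank k ((Fin n → k) × ((Fin n → k) × k)) = 2 * n + 1 := by
    rw [Module.finrank_prod, Module.finrank_prod, Module.finrank_fintype_fun_eq_card,
      Module.finrank_self, Fintype.card_fin]
    omega
  have hφker : Module.finrank k (LinearMap.ker φ) = 2 * n := by
    have hrn := LinearMap.finrank_range_add_finrank_ker φ
    rw [LinearMap.range_eq_top.mpr hφsurj, finrank_top, Module.finrank_self, hdimtot] at hrn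
    omega
  have hrangeΨ : Module.finrank k (LinearMap.range Ψ) ≤ 2 * n := by
    rw [← hφker]
    exact Submodule.finrank_mono hrange_le
  have hdomdim : Module.finrank k ((Fin n × Fin n) → k) = n * n := by
    rw [Module.finrank_fintype_fun_eq_card, Fintype.card_prod, Fintype.card_fin]
  have hrnΨ := LinearMap.finrank_range_add_finrank_ker Ψ
  rw [hdomdim] at hrnΨ
  have hkerH := Submodule.finrank_mono hker_le
  have hrnH := LinearMap.finrank_range_add_finrank_ker H.mulVecLin
  rw [hdomdim] at hrnH
  have hrank : H.rank = Module.finrank k (LinearMap.range H.mulVecLin) := rfl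
  rw [hrank]
  omega
end

section
/- Let k be a field of characteristic zero, f ∈ k[x_1,…,x_m], and y ∈ k^m with f(y) = 0. Then the determinantal complexity of f is at least rank(Hessian of f at y)/2. -/
open MvPolynomial Matrix

/-- A determinantal representation of `f` of size `N`: an `N × N` matrix of
affine-linear forms whose determinant is `f`. -/
def IsDetRep {k : Type*} [CommRing k] {m : ℕ} (f : MvPolynomial (Fin m) k) (N : ℕ)
    (F : Fin N → Fin N → MvPolynomial (Fin m) k) : Prop :=
  (∀ i j, (F i j).totalDegree ≤ 1) ∧ (Matrix.of F).det = f

lemma pderiv_pderiv_eq_zero_s12 {k : Type*} [CommRing k] {σ : Type*} [DecidableEq σ]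
    {q : MvPolynomial σ k} (hq : q.totalDegree ≤ 1) (a b : σ) :
    pderiv a (pderiv b q) = 0 := by
  conv_lhs => rw [q.as_sum]
  rw [map_sum, map_sum]
  refine Finset.sum_eq_zero fun s hs => ?_
  rw [pderiv_monomial]
  by_cases h : s b = 0
  · simp [h]
  · rw [pderiv_monomial]
    have hdeg : (s.sum fun _ e => e) ≤ 1 := le_trans (le_totalDegree hs) hq
    have hsum : (s.sum fun _ e => e) = ∑ x ∈ s.support, s x := rfl
    have hb : s b ≤ s.sum fun _ e => e := by
      rw [hsum]
      exact Finset.single_le_sum (fun _ _ => Nat.zero_le _)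
        (Finsupp.mem_support_iff.mpr h)
    have hz : ((s - Finsupp.single b 1 : σ →₀ ℕ)) a = 0 := by
      rw [Finsupp.tsub_apply]
      rcases eq_or_ne a b with rfl | hab
      · simp only [Finsupp.single_eq_same]
        omega
      · rw [Finsupp.single_eq_of_ne' (Ne.symm hab)]
        by_contra hsa
        have ha' : s a ≠ 0 := by omega
        have : s a + s b ≤ ∑ x ∈ s.support, s x := by
          rw [← Finset.add_sum_erase _ _ (Finsupp.mem_support_iff.mpr ha')]
          gcongr
          exact Finset.single_le_sum (fun _ _ => Nat.zero_le _)
            (Finset.mem_erase.mpr ⟨Ne.symm hab, Finsupp.mem_support_iff.mpr h⟩)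
        omega
    simp [hz]

lemma my_updateRow_comm {α m' n' : Type*} [DecidableEq m'] (A : Matrix m' n' α) {i j : m'}
    (h : i ≠ j) (x z : n' → α) :
    (A.updateRow i x).updateRow j z = (A.updateRow j z).updateRow i x := by
  ext r s
  rcases eq_or_ne r i with rfl | hri
  · simp [Matrix.updateRow_apply, h]
  · rcases eq_or_ne r j with rfl | hrj
    · simp [Matrix.updateRow_apply, h.symm]
    · simp [Matrix.updateRow_apply, hri, hrj]

lemma my_pderiv_prod {k σ ι : Type*} [CommRing k] [DecidableEq σ] [DecidableEq ι] (a : σ)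
    (s : Finset ι) (g : ι → MvPolynomial σ k) :
    pderiv a (∏ i ∈ s, g i) = ∑ i ∈ s, pderiv a (g i) * ∏ j ∈ s.erase i, g j := by
  induction s using Finset.induction_on with
  | empty => simp
  | @insert x s hx ih =>
    rw [Finset.prod_insert hx, pderiv_mul, ih, Finset.sum_insert hx,
      Finset.erase_insert hx, Finset.mul_sum]
    congr 1
    refine Finset.sum_congr rfl fun i hi => ?_
    rw [Finset.erase_insert_of_ne (by rintro rfl; exact hx hi),
      Finset.prod_insert (fun hh => hx (Finset.mem_of_mem_erase hh))]
    ring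

lemma my_pderiv_det {k σ n : Type*} [CommRing k] [DecidableEq σ] [Fintype n] [DecidableEq n]
    (a : σ) (G : Matrix n n (MvPolynomial σ k)) :
    pderiv a G.det = ∑ r, (G.updateRow r fun l => pderiv a (G r l)).det := by
  have key : ∀ r, (G.updateRow r fun l => pderiv a (G r l)).det
      = ∑ σ' : Equiv.Perm n, ((Equiv.Perm.sign σ' : ℤ) : MvPolynomial σ k) *
          ∏ i, (if σ' i = r then pderiv a (G r i) else G (σ' i) i) := by
    intro r
    rw [det_apply']
    refine Finset.sum_congr rfl fun σ' _ => ?_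
    refine congrArg _ (Finset.prod_congr rfl fun i _ => ?_)
    rw [Matrix.updateRow_apply]
  rw [det_apply', map_sum, Finset.sum_congr rfl fun r _ => key r, Finset.sum_comm]
  refine Finset.sum_congr rfl fun σ' _ => ?_
  -- LHS : pderiv a (sign * prod) ; RHS : ∑ r, sign * ∏ i, ite ...
  have hsmul : ∀ P : MvPolynomial σ k,
      pderiv a (((Equiv.Perm.sign σ' : ℤ) : MvPolynomial σ k) * P)
        = ((Equiv.Perm.sign σ' : ℤ) : MvPolynomial σ k) * pderiv a P := by
    intro P
    rw [← zsmul_eq_mul, map_zsmul, zsmul_eq_mul]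
  rw [hsmul, my_pderiv_prod]
  rw [Finset.mul_sum]
  rw [← Equiv.sum_comp σ' (fun r => ((Equiv.Perm.sign σ' : ℤ) : MvPolynomial σ k) *
      ∏ i, (if σ' i = r then pderiv a (G r i) else G (σ' i) i))]
  refine Finset.sum_congr rfl fun j _ => ?_
  congr 1
  rw [← Finset.mul_prod_erase Finset.univ _ (Finset.mem_univ j)]
  rw [if_pos rfl]
  congr 1
  refine Finset.prod_congr rfl fun i hi => ?_
  rw [if_neg]
  exact fun hh => (Finset.mem_erase.mp hi).1 (σ'.injective hh)

lemma my_det_indep {k n : Type*} [CommRing k] [Fintype n] [DecidableEq n]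
    (B : Matrix n n k) (i p : n) (x : n → k) :
    ((B.updateRow i x).updateCol p (Pi.single i 1)).det
      = (B.updateCol p (Pi.single i 1)).det := by
  rw [det_apply', det_apply']
  refine Finset.sum_congr rfl fun σ _ => ?_
  by_cases h : σ p = i
  · refine congrArg _ (Finset.prod_congr rfl fun l _ => ?_)
    by_cases hl : l = p
    · subst hl; rw [Matrix.updateCol_self, Matrix.updateCol_self]
    · rw [Matrix.updateCol_ne hl, Matrix.updateCol_ne hl, Matrix.updateRow_ne]
      exact fun hh => hl (σ.injective (by rw [hh, h]))
  · have e1 : ((B.updateRow i x).updateCol p (Pi.single i 1)) (σ p) p = 0 := by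
      rw [Matrix.updateCol_self, Pi.single_eq_of_ne h]
    have e2 : (B.updateCol p (Pi.single i 1)) (σ p) p = 0 := by
      rw [Matrix.updateCol_self, Pi.single_eq_of_ne h]
    have z1 : ∏ l, ((B.updateRow i x).updateCol p (Pi.single i 1)) (σ l) l = 0 :=
      Finset.prod_eq_zero (Finset.mem_univ p) e1
    have z2 : ∏ l, (B.updateCol p (Pi.single i 1)) (σ l) l = 0 :=
      Finset.prod_eq_zero (Finset.mem_univ p) e2
    rw [z1, z2]

lemma my_split {k n : Type*} [Field k] [Fintype n] [DecidableEq n]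
    (M : Matrix n n k) (c : n → k) (hc : M.mulVec c = 0) (p : n)
    {i j : n} (hij : i ≠ j) (x z : n → k) :
    c p * ((M.updateRow j z).updateRow i x).det
      = (x ⬝ᵥ c) * ((M.updateRow j z).updateCol p (Pi.single i 1)).det
        + (z ⬝ᵥ c) * ((M.updateRow i x).updateCol p (Pi.single j 1)).det := by
  set Nm := (M.updateRow j z).updateRow i x with hNm
  have h1 : (fun r => ∑ l, c l • Nm r l)
      = (x ⬝ᵥ c) • (Pi.single i 1 : n → k) + (z ⬝ᵥ c) • (Pi.single j 1 : n → k) := by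
    funext r
    have hsum : ∑ l, c l • Nm r l = Nm r ⬝ᵥ c := by
      simp [dotProduct, mul_comm, smul_eq_mul]
    rcases eq_or_ne r i with rfl | hri
    · simp [hsum, Nm, Pi.single_apply, hij, Matrix.updateRow_apply, dotProduct, mul_comm]
    · rcases eq_or_ne r j with rfl | hrj
      · simp [hsum, Nm, Pi.single_apply, hij.symm, Matrix.updateRow_apply, hri,
          dotProduct, mul_comm]
      · have hr : Nm r = M r := by
          simp [Nm, Matrix.updateRow_apply, hri, hrj]
        have hz : M r ⬝ᵥ c = 0 := congrFun hc r
        rw [hsum, hr, hz]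
        simp [Pi.single_apply, Ne.symm hri, Ne.symm hrj]
  have h2 := Matrix.det_updateCol_sum Nm p c
  rw [h1, Matrix.det_updateCol_add, Matrix.det_updateCol_smul,
    Matrix.det_updateCol_smul, smul_eq_mul] at h2
  rw [← h2]
  congr 2
  · exact my_det_indep (M.updateRow j z) i p x
  · rw [hNm, my_updateRow_comm M hij.symm z x]
    exact my_det_indep (M.updateRow i x) j p z

/-- (Mignon–Ressayre bound) In characteristic zero, if `f(y) = 0` then the
determinantal complexity of `f` is at least half the rank of the Hessian of
`f` at `y`: every determinantal representation of `f` has size `N` with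
`rank(Hessian) ≤ 2N`. -/
theorem dc_ge_half_rank_hessian (k : Type*) [Field k] [CharZero k] (m : ℕ)
    (f : MvPolynomial (Fin m) k) (y : Fin m → k) (hy : eval y f = 0)
    (N : ℕ) (F : Fin N → Fin N → MvPolynomial (Fin m) k) (hF : IsDetRep f N F) :
    (hessianAt f y).rank ≤ 2 * N := by
  classical
  obtain ⟨hdeg, hdet⟩ := hF
  set Mk : Matrix (Fin N) (Fin N) k := (Matrix.of F).map (eval y) with hMk
  have hdetMk : Mk.det = 0 := by
    rw [hMk, ← RingHom.mapMatrix_apply, ← RingHom.map_det, hdet, hy]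
  obtain ⟨c, hc0, hcMk⟩ := (Matrix.exists_mulVec_eq_zero_iff).mpr hdetMk
  obtain ⟨p, hp⟩ := Function.ne_iff.mp hc0
  have hp : c p ≠ 0 := hp
  -- the constant matrices of first derivatives, evaluated at y
  set A : Fin m → Fin N → Fin N → k := fun a i l => eval y (pderiv a (F i l)) with hA
  set K : Fin N → Matrix (Fin N) (Fin N) k → k :=
    fun i X => (X.updateCol p (Pi.single i 1)).det with hK
  set w : Fin N → Fin m → k :=
    fun i b => ∑ j ∈ Finset.univ.erase i, K i (Mk.updateRow j (A b j)) with hw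
  set u : Fin N → Fin m → k := fun i a => (c p)⁻¹ * ((A a i) ⬝ᵥ c) with hu
  -- the Hessian entries via the second derivative of the determinant
  have hstep : ∀ a b : Fin m, eval y (pderiv a (pderiv b f))
      = ∑ j, ∑ i ∈ Finset.univ.erase j,
          ((Mk.updateRow j (A b j)).updateRow i (A a i)).det := by
    intro a b
    rw [← hdet, my_pderiv_det b (Matrix.of F), map_sum, map_sum]
    refine Finset.sum_congr rfl fun j _ => ?_
    set Gj := (Matrix.of F).updateRow j (fun l => pderiv b ((Matrix.of F) j l)) with hGj
    rw [my_pderiv_det a Gj, map_sum]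
    -- split off the i = j term, which vanishes
    rw [← Finset.add_sum_erase _ _ (Finset.mem_univ j)]
    have hzero : eval y (Gj.updateRow j fun l => pderiv a (Gj j l)).det = 0 := by
      have : (Gj.updateRow j fun l => pderiv a (Gj j l)).det = 0 := by
        refine Matrix.det_eq_zero_of_row_eq_zero j fun l => ?_
        rw [Matrix.updateRow_self]
        rw [hGj, Matrix.updateRow_self]
        exact pderiv_pderiv_eq_zero_s12 (hdeg j l) a b
      rw [this, map_zero]
    rw [hzero, zero_add]
    refine Finset.sum_congr rfl fun i hi => ?_
    have hij : i ≠ j := (Finset.mem_erase.mp hi).1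
    rw [RingHom.map_det]
    congr 1
    ext r l
    simp only [RingHom.mapMatrix_apply, Matrix.map_apply, Matrix.updateRow_apply, hGj,
      Matrix.of_apply]
    rcases eq_or_ne r i with rfl | hri
    · simp [hA, hij]
    · rcases eq_or_ne r j with rfl | hrj
      · simp [hri, hA, hMk]
      · simp [hri, hrj, hMk]
  -- factor the Hessian
  set P : Matrix (Fin m) (Fin N ⊕ Fin N) k :=
    Matrix.of fun a s => Sum.elim (fun i => u i a) (fun i => w i a) s with hP
  set Q : Matrix (Fin N ⊕ Fin N) (Fin m) k :=
    Matrix.of fun s b => Sum.elim (fun i => w i b) (fun i => u i b) s with hQ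
  have hfac : hessianAt f y = P * Q := by
    ext a b
    have hPQ : (P * Q) a b = ∑ i, u i a * w i b + ∑ i, w i a * u i b := by
      rw [Matrix.mul_apply, Fintype.sum_sum_type]
      rfl
    have hH : hessianAt f y a b = eval y (pderiv a (pderiv b f)) := rfl
    rw [hH, hPQ, hstep a b]
    refine mul_left_cancel₀ hp ?_
    rw [Finset.mul_sum, mul_add, Finset.mul_sum, Finset.mul_sum]
    have lhs_eq : ∀ j, c p * ∑ i ∈ Finset.univ.erase j,
        ((Mk.updateRow j (A b j)).updateRow i (A a i)).det
        = ∑ i ∈ Finset.univ.erase j,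
            ((A a i ⬝ᵥ c) * K i (Mk.updateRow j (A b j))
              + (A b j ⬝ᵥ c) * K j (Mk.updateRow i (A a i))) := by
      intro j
      rw [Finset.mul_sum]
      refine Finset.sum_congr rfl fun i hi => ?_
      exact my_split Mk c hcMk p (Finset.mem_erase.mp hi).1 (A a i) (A b j)
    rw [Finset.sum_congr rfl fun j _ => lhs_eq j]
    have split_sums : ∑ j, ∑ i ∈ Finset.univ.erase j,
        ((A a i ⬝ᵥ c) * K i (Mk.updateRow j (A b j))
          + (A b j ⬝ᵥ c) * K j (Mk.updateRow i (A a i)))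
        = (∑ j, ∑ i ∈ Finset.univ.erase j, (A a i ⬝ᵥ c) * K i (Mk.updateRow j (A b j)))
          + ∑ j, ∑ i ∈ Finset.univ.erase j,
              (A b j ⬝ᵥ c) * K j (Mk.updateRow i (A a i)) := by
      rw [← Finset.sum_add_distrib]
      exact Finset.sum_congr rfl fun j _ => Finset.sum_add_distrib
    rw [split_sums]
    congr 1
    · -- first part : swap the order of summation
      rw [Finset.sum_comm' (t' := Finset.univ) (s' := fun i => Finset.univ.erase i)
        (by intro x z; simp [Finset.mem_erase]; exact ne_comm)]
      refine Finset.sum_congr rfl fun i _ => ?_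
      rw [hw, ← Finset.mul_sum]
      have : c p * (u i a * w i b) = (A a i ⬝ᵥ c) * w i b := by
        rw [hu]; field_simp
      rw [this, hw]
    · refine Finset.sum_congr rfl fun j _ => ?_
      rw [← Finset.mul_sum]
      have hwj : ∑ i ∈ Finset.univ.erase j, K j (Mk.updateRow i (A a i)) = w j a := rfl
      rw [hwj, hu]
      field_simp
  rw [hfac]
  calc (P * Q).rank ≤ P.rank := Matrix.rank_mul_le_left P Q
    _ ≤ Fintype.card (Fin N ⊕ Fin N) := Matrix.rank_le_card_width P
    _ = 2 * N := by simp [two_mul]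
end

section
/- Let n ≥ 3, m ≥ 2 and let R be the n×n matrix over ℚ with R_{1,1} = 2(m-1)(n-1), R_{1,j} = R_{j,1} = m(n-2) for j ≥ 2, R_{j,j} = -2(m-1) for j ≥ 2, and R_{i,j} = -2m for distinct i,j ≥ 2. Then R is invertible. -/
/-- The block `R^{(2)}` of the Hessian of the multipermanent: the `n × n`
matrix with `(1,1)` entry `2(m-1)(n-1)`, entries `m(n-2)` elsewhere in the
first row and column, diagonal entries `-2(m-1)` outside the first, and `-2m`
in all remaining positions, is invertible for `n ≥ 3`, `m ≥ 2`. -/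
theorem mperm_block_invertible (m n : ℕ) (hn : 3 ≤ n) (hm : 2 ≤ m) :
    IsUnit (Matrix.det (Matrix.of fun i j : Fin n =>
      if i.val = 0 ∧ j.val = 0 then 2 * ((m : ℚ) - 1) * ((n : ℚ) - 1)
      else if i.val = 0 ∨ j.val = 0 then (m : ℚ) * ((n : ℚ) - 2)
      else if i = j then -2 * ((m : ℚ) - 1)
      else -2 * (m : ℚ))) := by
  obtain ⟨n, rfl⟩ : ∃ k, n = k + 1 := ⟨n - 1, by omega⟩
  have hn2 : 2 ≤ n := by omega
  set q : ℚ := (m : ℚ) with hq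
  set p : ℚ := ((n + 1 : ℕ) : ℚ) with hp
  have hpn : p = (n : ℚ) + 1 := by rw [hp]; push_cast; ring
  have hq2 : (2 : ℚ) ≤ q := by rw [hq]; exact_mod_cast hm
  have hp3 : (3 : ℚ) ≤ p := by rw [hpn]; have : (2:ℚ) ≤ (n:ℚ) := by exact_mod_cast hn2
                               linarith
  set β : ℚ := q * (p - 2) with hβ
  set D : ℚ := (p - 1) * (q * p - 2) ^ 2 with hD
  have hD0 : D ≠ 0 := by
    have h1 : (0:ℚ) < p - 1 := by linarith
    have h2 : (0:ℚ) < q * p - 2 := by nlinarith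
    positivity
  set c : ℚ := (-4 * q * (q - 1) * (p - 1) - β ^ 2) / (2 * D) with hc
  set B : Matrix (Fin (n + 1)) (Fin (n + 1)) ℚ := Matrix.of fun i j =>
    if i.val = 0 ∧ j.val = 0 then (2 * q * (p - 1) - 2) / D
    else if i.val = 0 ∨ j.val = 0 then β / D
    else c + if i = j then 1 / 2 else 0 with hB
  apply Matrix.isUnit_det_of_right_inverse (B := B)
  ext i j
  rw [Matrix.mul_apply, Fin.sum_univ_succ]
  rcases Fin.eq_zero_or_eq_succ i with rfl | ⟨i, rfl⟩ <;>
    rcases Fin.eq_zero_or_eq_succ j with rfl | ⟨j, rfl⟩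
  · -- (0,0)
    simp only [hB, Matrix.of_apply, Fin.val_zero, Fin.val_succ, Matrix.one_apply_eq]
    simp only [if_pos, Nat.succ_ne_zero, and_true, and_false, if_false, if_true,
      Nat.add_eq_zero, one_ne_zero, false_and, or_true, true_or, true_and, or_false,
      Finset.sum_const, Finset.card_univ, Fintype.card_fin, nsmul_eq_mul]
    have hn' : (n : ℚ) = p - 1 := by rw [hpn]; ring
    rw [hn']
    field_simp
    rw [hβ]
    ring
  · -- (0, j+1)
    simp only [hB, Matrix.of_apply, Fin.val_zero, Fin.val_succ, Matrix.one_apply,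
      Nat.succ_ne_zero, Nat.add_eq_zero, one_ne_zero, and_false, if_false, true_and,
      false_and, true_or, or_false, if_true, and_true, or_true]
    have h0 : ¬ ((0 : Fin (n+1)) = j.succ) := Ne.symm (Fin.succ_ne_zero j)
    rw [if_neg h0]
    have hsum : ∀ k : Fin n,
        β * (c + if k.succ = j.succ then 1 / 2 else 0)
          = β * c + (if k = j then β / 2 else 0) := by
      intro k
      simp only [Fin.succ_inj]
      split_ifs <;> ring
    rw [Finset.sum_congr rfl fun k _ => hsum k, Finset.sum_add_distrib,
      Finset.sum_const, Finset.sum_ite_eq' Finset.univ j fun _ => β / 2]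
    simp only [Finset.mem_univ, if_true, Finset.card_univ, Fintype.card_fin, nsmul_eq_mul]
    have hn' : (n : ℚ) = p - 1 := by rw [hpn]; ring
    rw [hn', hc, hβ]
    field_simp
    ring
  · -- (i+1, 0)
    simp only [hB, Matrix.of_apply, Fin.val_zero, Fin.val_succ, Matrix.one_apply,
      Nat.succ_ne_zero, Nat.add_eq_zero, one_ne_zero, and_false, if_false, false_and,
      true_and, and_true, or_true, true_or, or_false, if_true]
    have h0 : ¬ (i.succ = (0 : Fin (n+1))) := Fin.succ_ne_zero i
    rw [if_neg h0]
    have hsum : ∀ k : Fin n,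
        (if i.succ = k.succ then -2 * (q - 1) else -2 * q) * (β / D)
          = (-2 * q) * (β / D) + (if i = k then 2 * (β / D) else 0) := by
      intro k
      simp only [Fin.succ_inj]
      split_ifs <;> ring
    rw [Finset.sum_congr rfl fun k _ => hsum k, Finset.sum_add_distrib,
      Finset.sum_const, Finset.sum_ite_eq Finset.univ i fun _ => 2 * (β / D)]
    simp only [Finset.mem_univ, if_true, Finset.card_univ, Fintype.card_fin, nsmul_eq_mul]
    have hn' : (n : ℚ) = p - 1 := by rw [hpn]; ring
    rw [hn', hβ]
    field_simp
    ring
  · -- (i+1, j+1)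
    simp only [hB, Matrix.of_apply, Fin.val_zero, Fin.val_succ, Matrix.one_apply,
      Nat.succ_ne_zero, Nat.add_eq_zero, one_ne_zero, and_false, if_false, false_and,
      true_and, and_true, or_false, or_true, true_or, if_true, false_or]
    have hsum : ∀ k : Fin n,
        (if i.succ = k.succ then -2 * (q - 1) else -2 * q)
            * (c + if k.succ = j.succ then 1 / 2 else 0)
          = ((-2 * q) * c + ((if k = j then -q else 0) + ((if i = k then 2 * c else 0)
              + (if i = k then (if k = j then (1:ℚ) else 0) else 0)))) := by
      intro k
      simp only [Fin.succ_inj]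
      split_ifs <;> ring
    rw [Finset.sum_congr rfl fun k _ => hsum k]
    rw [Finset.sum_add_distrib, Finset.sum_add_distrib, Finset.sum_add_distrib,
      Finset.sum_const,
      Finset.sum_ite_eq' Finset.univ j fun _ => -q,
      Finset.sum_ite_eq Finset.univ i fun _ => 2 * c,
      Finset.sum_ite_eq Finset.univ i fun k => if k = j then (1:ℚ) else 0]
    simp only [Finset.mem_univ, if_true, Finset.card_univ, Fintype.card_fin, nsmul_eq_mul,
      Fin.succ_inj]
    have hn' : (n : ℚ) = p - 1 := by rw [hpn]; ring
    rw [hn', hc, hβ]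
    split_ifs with h
    · field_simp
      ring
    · field_simp
      ring
end

section
/- For every composition m = (m_1,…,m_n), the determinantal complexity of mperm_m is at most (Π_{i=1}^n (m_i + 1)) - 1; i.e., there is a square matrix of that size with affine-linear entries in the variables x_{i,j} whose determinant equals mperm_m (possibly after negating one row). -/
open MvPolynomial Matrix

open Finset

namespace DCMperm

variable {n : ℕ} (m : Fin n → ℕ)

abbrev R (n : ℕ) (m : Fin n → ℕ) := MvPolynomial (Fin (∑ j, m j) × Fin n) ℚ
abbrev Box (m : Fin n → ℕ) := ∀ i, Fin (m i + 1)

def lvl (t : Box m) : ℕ := ∑ i, (t i : ℕ)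

noncomputable def Xlab (a : ℕ) (j : Fin n) : R n m :=
  if h : a < ∑ j, m j then X (⟨a, h⟩, j) else 0

def isEdge (j : Fin n) (t s : Box m) : Prop :=
  ∀ i, (s i : ℕ) = (t i : ℕ) + if i = j then 1 else 0

instance (j : Fin n) (t s : Box m) : Decidable (isEdge m j t s) :=
  inferInstanceAs (Decidable (∀ i, _))

noncomputable def Nmat : Matrix (Box m) (Box m) (R n m) :=
  Matrix.of fun t s => ∑ j, if isEdge m j t s then Xlab m (lvl m t) j else 0

lemma lvl_le (t : Box m) : lvl m t ≤ ∑ j, m j :=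
  Finset.sum_le_sum fun i _ => Fin.is_le _

lemma sum_fib (k : ℕ) (σ : Fin k → Fin n) :
    ∑ j, (univ.filter fun i => σ i = j).card = k := by
  have h := Finset.card_eq_sum_card_fiberwise (f := σ) (s := univ) (t := univ)
    (fun a _ => mem_univ _)
  simpa using h.symm

lemma edge_lvl {j : Fin n} {t s : Box m} (h : isEdge m j t s) :
    lvl m s = lvl m t + 1 := by
  unfold lvl
  calc ∑ i, (s i : ℕ) = ∑ i, ((t i : ℕ) + if i = j then 1 else 0) :=
        Finset.sum_congr rfl fun i _ => h i
    _ = lvl m t + 1 := by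
        rw [Finset.sum_add_distrib, Finset.sum_ite_eq' univ j fun _ => 1]
        simp [lvl]

def succA (j : Fin n) (s : Box m) : Box m :=
  fun i => ⟨min ((s i : ℕ) + if i = j then 1 else 0) (m i),
    Nat.lt_succ_of_le (min_le_right _ _)⟩

lemma isEdge_iff {j : Fin n} {s : Box m} (h : (s j : ℕ) < m j) (u : Box m) :
    isEdge m j s u ↔ u = succA m j s := by
  constructor
  · intro he
    funext i
    apply Fin.ext
    rw [he i]
    show _ = min _ _
    rcases eq_or_ne i j with rfl | hij
    · simp [Nat.min_eq_left h]
    · simp [hij, Nat.min_eq_left (Fin.is_le (s i))]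
  · rintro rfl i
    show min _ _ = _
    rcases eq_or_ne i j with rfl | hij
    · simp [Nat.min_eq_left h]
    · simp [hij, Nat.min_eq_left (Fin.is_le (s i))]

lemma not_isEdge {j : Fin n} {s : Box m} (h : ¬ (s j : ℕ) < m j) (u : Box m) :
    ¬ isEdge m j s u := by
  intro he
  have h1 := he j
  simp at h1
  have := Fin.is_le (u j)
  omega

lemma succA_lvl {j : Fin n} {s : Box m} (h : (s j : ℕ) < m j) :
    lvl m (succA m j s) = lvl m s + 1 :=
  edge_lvl m ((isEdge_iff m h _).mpr rfl)

lemma succA_val {j : Fin n} {s : Box m} (h : (s j : ℕ) < m j) (j' : Fin n) :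
    ((succA m j s) j' : ℕ) = (s j' : ℕ) + if j' = j then 1 else 0 := by
  show min _ _ = _
  rcases eq_or_ne j' j with rfl | hjj
  · simp [Nat.min_eq_left h]
  · simp [hjj, Nat.min_eq_left (Fin.is_le (s j'))]

lemma pow_apply (t : Box m) (k : ℕ) (s : Box m) :
    (Nmat m ^ k) s t =
      ∑ σ ∈ univ.filter
          (fun σ : Fin k → Fin n =>
            ∀ j, (t j : ℕ) = (s j : ℕ) + (univ.filter fun i => σ i = j).card),
        ∏ i : Fin k, Xlab m (lvl m s + (i : ℕ)) (σ i) := by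
  induction k generalizing s with
  | zero =>
      rw [pow_zero, Matrix.one_apply]
      by_cases hst : s = t
      · subst hst
        rw [if_pos rfl]
        rw [Finset.filter_true_of_mem (fun σ _ => by
          intro j
          simp [show (Finset.univ : Finset (Fin 0)) = ∅ from rfl])]
        simp
      · rw [if_neg hst]
        symm
        rw [Finset.filter_false_of_mem (fun σ _ hσ => hst (funext fun j => Fin.ext (by
          have h1 := hσ j
          simp [show (Finset.univ : Finset (Fin 0)) = ∅ from rfl] at h1
          omega)))]
        exact Finset.sum_empty
  | succ k ih =>
      have lhs : (Nmat m ^ (k+1)) s t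
          = ∑ j, (if (s j : ℕ) < m j
              then Xlab m (lvl m s) j * (Nmat m ^ k) (succA m j s) t else 0) := by
        rw [pow_succ', Matrix.mul_apply]
        have hterm : ∀ u, Nmat m s u * (Nmat m ^ k) u t
            = ∑ j, (if isEdge m j s u then Xlab m (lvl m s) j * (Nmat m ^ k) u t else 0) := by
          intro u
          show (∑ j, if isEdge m j s u then Xlab m (lvl m s) j else 0) * _ = _
          rw [Finset.sum_mul]
          exact Finset.sum_congr rfl fun j _ => by split <;> simp
        rw [Finset.sum_congr rfl fun u _ => hterm u, Finset.sum_comm]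
        refine Finset.sum_congr rfl fun j _ => ?_
        by_cases h : (s j : ℕ) < m j
        · rw [if_pos h]
          calc ∑ u, (if isEdge m j s u then Xlab m (lvl m s) j * (Nmat m ^ k) u t else 0)
              = ∑ u, (if u = succA m j s then Xlab m (lvl m s) j * (Nmat m ^ k) u t else 0) :=
                Finset.sum_congr rfl fun u _ => by rw [if_congr (isEdge_iff m h u) rfl rfl]
            _ = _ := by rw [Finset.sum_ite_eq' univ (succA m j s)]; simp
        · rw [if_neg h]
          exact Finset.sum_eq_zero fun u _ => if_neg (not_isEdge m h u)
      rw [lhs, Finset.sum_filter, ← Equiv.sum_comp (Fin.consEquiv fun _ => Fin n),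
        Fintype.sum_prod_type]
      refine Finset.sum_congr rfl fun j _ => ?_
      have hcard : ∀ (σ : Fin k → Fin n) (j' : Fin n),
          ((univ.filter fun i => (Fin.consEquiv fun _ => Fin n) (j, σ) i = j').card : ℕ)
          = (if j = j' then 1 else 0) + (univ.filter fun i => σ i = j').card := by
        intro σ j'
        rw [Finset.card_filter, Finset.card_filter, Fin.sum_univ_succ]
        simp [Fin.consEquiv]
      have hprod : ∀ σ : Fin k → Fin n,
          (∏ i : Fin (k+1), Xlab m (lvl m s + i) ((Fin.consEquiv fun _ => Fin n) (j, σ) i))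
          = Xlab m (lvl m s) j * ∏ i : Fin k, Xlab m (lvl m s + 1 + i) (σ i) := by
        intro σ
        rw [Fin.prod_univ_succ]
        simp only [Fin.consEquiv, Equiv.coe_fn_mk, Fin.cons_zero, Fin.cons_succ,
          Fin.val_zero, Fin.val_succ, add_zero]
        congr 1
        refine Finset.prod_congr rfl fun i _ => ?_
        congr 1
        omega
      by_cases h : (s j : ℕ) < m j
      · rw [if_pos h, ih (succA m j s), succA_lvl m h, Finset.mul_sum]
        rw [Finset.sum_filter]
        refine Finset.sum_congr rfl fun σ _ => ?_
        have hiff : (∀ j', (t j' : ℕ) = ((succA m j s) j' : ℕ) + (univ.filter fun i => σ i = j').card)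
            ↔ (∀ j', (t j' : ℕ) = (s j' : ℕ) + (univ.filter fun i => (Fin.consEquiv fun _ => Fin n) (j, σ) i = j').card) := by
          constructor
          · intro hh j'
            have h1 := hh j'
            rw [succA_val m h j'] at h1
            rw [hcard σ j']
            rcases eq_or_ne j j' with rfl | hne
            · simp only [if_pos rfl] at h1 ⊢; omega
            · rw [if_neg (Ne.symm hne)] at h1; rw [if_neg hne]; omega
          · intro hh j'
            have h1 := hh j'
            rw [hcard σ j'] at h1
            rw [succA_val m h j']
            rcases eq_or_ne j j' with rfl | hne
            · simp only [if_pos rfl] at h1 ⊢; omega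
            · rw [if_neg hne] at h1; rw [if_neg (Ne.symm hne)]; omega
        rw [hprod σ]
        exact if_congr hiff rfl rfl
      · rw [if_neg h]
        symm
        refine Finset.sum_eq_zero fun σ _ => ?_
        rw [if_neg]
        intro hp
        have h1 := hp j
        rw [hcard σ j] at h1
        simp at h1
        have h2 := Fin.is_le (t j)
        have h3 := Fin.is_le (s j)
        omega

def bot : Box m := fun i => ⟨0, Nat.succ_pos _⟩
def top : Box m := fun i => Fin.last (m i)

lemma bot_val (j : Fin n) : ((bot m) j : ℕ) = 0 := rfl
lemma top_val (j : Fin n) : ((top m) j : ℕ) = m j := rfl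

lemma lvl_bot : lvl m (bot m) = 0 := by simp [lvl, bot]

lemma pow_bot_top_ne {k : ℕ} (hk : k ≠ ∑ j, m j) :
    (Nmat m ^ k) (bot m) (top m) = 0 := by
  rw [pow_apply]
  rw [Finset.filter_false_of_mem, Finset.sum_empty]
  intro σ _ hc
  apply hk
  have h1 : ∑ j, ((top m) j : ℕ) = ∑ j, (((bot m) j : ℕ) + (univ.filter fun i => σ i = j).card) :=
    Finset.sum_congr rfl fun j _ => hc j
  rw [Finset.sum_add_distrib, sum_fib] at h1
  simp only [top_val, bot_val, Finset.sum_const_zero] at h1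
  omega

lemma pow_bot_top :
    (Nmat m ^ (∑ j, m j)) (bot m) (top m) = mpermPoly (∑ j, m j) n m := by
  rw [pow_apply, mpermPoly]
  refine Finset.sum_congr ?_ ?_
  · apply Finset.filter_congr
    intro σ _
    constructor
    · intro hc j
      have := hc j
      simp only [top_val, bot_val] at this
      omega
    · intro hc j
      have := hc j
      simp only [top_val, bot_val]
      omega
  · intro σ _
    refine Finset.prod_congr rfl fun i _ => ?_
    rw [lvl_bot, zero_add, Xlab, dif_pos i.isLt]

lemma nmat_nilpotent : Nmat m ^ ((∑ j, m j) + 1) = 0 := by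
  ext s t
  rw [pow_apply, Matrix.zero_apply]
  rw [Finset.filter_false_of_mem, Finset.sum_empty]
  intro σ _ hc
  have h1 : ∑ j, ((t j : ℕ)) = ∑ j, (((s j : ℕ)) + (univ.filter fun i => σ i = j).card) :=
    Finset.sum_congr rfl fun j _ => hc j
  rw [Finset.sum_add_distrib, sum_fib] at h1
  have h2 := lvl_le m t
  have h3 : lvl m t = lvl m s + ((∑ j, m j) + 1) := h1
  omega

noncomputable def Qmat : Matrix (Box m) (Box m) (R n m) :=
  ∑ k ∈ Finset.range ((∑ j, m j) + 1), (-1 : R n m) ^ k • Nmat m ^ k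

lemma hNQ : Nmat m * Qmat m = ∑ k ∈ Finset.range ((∑ j, m j) + 1),
    (-1 : R n m) ^ k • Nmat m ^ (k + 1) := by
  rw [Qmat, Finset.mul_sum]
  exact Finset.sum_congr rfl fun k _ => by rw [mul_smul_comm, ← pow_succ']

lemma hQN : Qmat m * Nmat m = ∑ k ∈ Finset.range ((∑ j, m j) + 1),
    (-1 : R n m) ^ k • Nmat m ^ (k + 1) := by
  rw [Qmat, Finset.sum_mul]
  exact Finset.sum_congr rfl fun k _ => by rw [smul_mul_assoc, ← pow_succ]

lemma key_sum : Qmat m + Nmat m * Qmat m = 1 := by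
  rw [hNQ, Qmat]
  rw [Finset.sum_range_succ' (fun k => (-1 : R n m) ^ k • Nmat m ^ k)]
  rw [Finset.sum_range_succ (fun k => (-1 : R n m) ^ k • Nmat m ^ (k + 1))]
  rw [nmat_nilpotent]
  simp only [pow_zero, one_smul, smul_zero, add_zero]
  have hz : (∑ k ∈ Finset.range (∑ j, m j), (-1 : R n m) ^ (k + 1) • Nmat m ^ (k + 1))
      + (∑ k ∈ Finset.range (∑ j, m j), (-1 : R n m) ^ k • Nmat m ^ (k + 1)) = 0 := by
    rw [← Finset.sum_add_distrib]
    refine Finset.sum_eq_zero fun k _ => ?_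
    rw [pow_succ, mul_neg_one, neg_smul, neg_add_cancel]
  rw [add_right_comm, hz, zero_add]

lemma hPQ : (1 + Nmat m) * Qmat m = 1 := by
  rw [add_mul, one_mul, key_sum]

lemma hQP : Qmat m * (1 + Nmat m) = 1 := by
  rw [mul_add, mul_one, hQN, ← hNQ, key_sum]

lemma nmat_apply_eq_zero {t s : Box m} (h : lvl m s ≠ lvl m t + 1) :
    Nmat m t s = 0 := by
  simp only [Nmat, Matrix.of_apply]
  exact Finset.sum_eq_zero fun j _ => if_neg fun he => h (edge_lvl m he)

lemma det_P : (1 + Nmat m).det = 1 := by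
  have hBT : (1 + Nmat m).BlockTriangular (lvl m) := by
    intro a b hab
    have hne : a ≠ b := fun h => by subst h; exact lt_irrefl _ hab
    rw [Matrix.add_apply, Matrix.one_apply_ne hne,
      nmat_apply_eq_zero m (by omega), add_zero]
  rw [hBT.det]
  refine Finset.prod_eq_one fun a _ => ?_
  have hblock : (1 + Nmat m).toSquareBlock (lvl m) a = 1 := by
    refine Matrix.ext fun i j => ?_
    rcases eq_or_ne i j with rfl | hij
    · simp only [Matrix.toSquareBlock_def, Matrix.of_apply, Matrix.add_apply,
        Matrix.one_apply_eq]
      rw [nmat_apply_eq_zero m (by omega), add_zero]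
    · have hij' : (i : Box m) ≠ (j : Box m) := fun h => hij (Subtype.ext h)
      have hlv : lvl m (j : Box m) ≠ lvl m (i : Box m) + 1 := by
        have h1 := i.2
        have h2 := j.2
        omega
      simp only [Matrix.toSquareBlock_def, Matrix.of_apply, Matrix.add_apply,
        Matrix.one_apply_ne hij', Matrix.one_apply_ne hij]
      rw [nmat_apply_eq_zero m hlv, zero_add]
  rw [hblock, Matrix.det_one]

lemma adj_P : (1 + Nmat m).adjugate = Qmat m := by
  have h1 : (1 + Nmat m) * (1 + Nmat m).adjugate = 1 := by
    rw [Matrix.mul_adjugate, det_P, one_smul]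
  have h2 := hQP m
  calc (1 + Nmat m).adjugate
      = (Qmat m * (1 + Nmat m)) * (1 + Nmat m).adjugate := by rw [h2, one_mul]
    _ = Qmat m * ((1 + Nmat m) * (1 + Nmat m).adjugate) := mul_assoc _ _ _
    _ = Qmat m := by rw [h1, mul_one]

lemma Q_bot_top : Qmat m (bot m) (top m)
    = (-1 : R n m) ^ (∑ j, m j) * mpermPoly (∑ j, m j) n m := by
  rw [Qmat, Matrix.sum_apply, Finset.sum_range_succ]
  have hz : ∀ k ∈ Finset.range (∑ j, m j),
      ((-1 : R n m) ^ k • Nmat m ^ k) (bot m) (top m) = 0 := fun k hk => by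
    rw [Matrix.smul_apply, pow_bot_top_ne m (Nat.ne_of_lt (Finset.mem_range.mp hk)),
      smul_zero]
  rw [Finset.sum_eq_zero hz, zero_add, Matrix.smul_apply, pow_bot_top, smul_eq_mul]

lemma det_updateRow :
    ((1 + Nmat m).updateRow (top m) (Pi.single (bot m) 1)).det
      = (-1 : R n m) ^ (∑ j, m j) * mpermPoly (∑ j, m j) n m := by
  rw [← Matrix.adjugate_apply, adj_P, Q_bot_top]

lemma deg_Xlab (a : ℕ) (j : Fin n) : (Xlab m a j).totalDegree ≤ 1 := by
  rw [Xlab]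
  split
  · rw [totalDegree_X]
  · simp

lemma deg_P (t s : Box m) : (((1 : Matrix (Box m) (Box m) (R n m)) + Nmat m) t s).totalDegree ≤ 1 := by
  rw [Matrix.add_apply]
  refine le_trans (totalDegree_add _ _) (max_le ?_ ?_)
  · rw [Matrix.one_apply]
    split
    · simp [totalDegree_one]
    · simp
  · simp only [Nmat, Matrix.of_apply]
    refine le_trans (totalDegree_finset_sum _ _) (Finset.sup_le fun j _ => ?_)
    split
    · exact deg_Xlab m _ j
    · simp

theorem main_pos (hm : ∃ i, m i ≠ 0) :
    ∃ F : Fin ((∏ i, (m i + 1)) - 1) → Fin ((∏ i, (m i + 1)) - 1) → R n m,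
      (∀ i j, (F i j).totalDegree ≤ 1) ∧
        (Matrix.of F).det = mpermPoly (∑ j, m j) n m := by
  obtain ⟨i0, hi0⟩ := hm
  have h2 : 2 ≤ ∏ i, (m i + 1) :=
    le_trans (by omega : 2 ≤ m i0 + 1)
      (Finset.single_le_prod' (fun i _ => Nat.le_add_left 1 (m i)) (mem_univ i0))
  have hcard : Fintype.card (Box m) = ∏ i, (m i + 1) := by
    simp [Fintype.card_pi]
  have hcard2 : Fintype.card (Fin (((∏ i, (m i + 1)) - 1) + 1)) = Fintype.card (Box m) := by
    rw [Fintype.card_fin, hcard]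
    omega
  set e : Fin (((∏ i, (m i + 1)) - 1) + 1) ≃ Box m := Fintype.equivOfCardEq hcard2 with he
  set r : Fin (((∏ i, (m i + 1)) - 1) + 1) ≃ Box m :=
    e.trans (Equiv.swap (e 0) (top m)) with hrdef
  set c : Fin (((∏ i, (m i + 1)) - 1) + 1) ≃ Box m :=
    e.trans (Equiv.swap (e 0) (bot m)) with hcdef
  have hr0 : r 0 = top m := by
    rw [hrdef, Equiv.trans_apply]
    exact Equiv.swap_apply_left _ _
  have hc0 : c 0 = bot m := by
    rw [hcdef, Equiv.trans_apply]
    exact Equiv.swap_apply_left _ _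
  set M : Matrix (Box m) (Box m) (R n m) :=
    (1 + Nmat m).updateRow (top m) (Pi.single (bot m) 1) with hMdef
  set A : Matrix (Fin (((∏ i, (m i + 1)) - 1) + 1)) (Fin (((∏ i, (m i + 1)) - 1) + 1)) (R n m) :=
    M.submatrix r c with hAdef
  set τ : Equiv.Perm (Fin (((∏ i, (m i + 1)) - 1) + 1)) := c.trans r.symm with hτdef
  have hdetA : A.det = ((Equiv.Perm.sign τ : ℤ) : R n m)
      * ((-1 : R n m) ^ (∑ j, m j) * mpermPoly (∑ j, m j) n m) := by
    have h1 : A = (M.submatrix ⇑r ⇑r).submatrix _root_.id ⇑τ := by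
      rw [Matrix.submatrix_submatrix]
      have hcomp : ⇑r ∘ ⇑τ = ⇑c := by
        funext j
        simp [hτdef]
      rw [hcomp, Function.comp_id]
    rw [h1, Matrix.det_permute' τ (M.submatrix ⇑r ⇑r), Matrix.det_submatrix_equiv_self,
      hMdef, det_updateRow m]
  have hA0 : ∀ j, A 0 j = if j = 0 then 1 else 0 := by
    intro j
    show M (r 0) (c j) = _
    rw [hr0, hMdef, Matrix.updateRow_self, Pi.single_apply]
    rw [← hc0]
    exact if_congr ⟨fun h => c.injective h, fun h => by rw [h]⟩ rfl rfl
  have hdetA2 : A.det = (A.submatrix Fin.succ Fin.succ).det := by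
    rw [Matrix.det_succ_row_zero]
    rw [Finset.sum_eq_single 0]
    · rw [hA0 0, if_pos rfl, Fin.succAbove_zero]
      simp
    · intro j _ hj
      rw [hA0 j, if_neg hj]
      ring
    · intro h
      simp at h
  have hGne : ∀ i : Fin ((∏ i, (m i + 1)) - 1), r i.succ ≠ top m := by
    intro i h
    rw [← hr0] at h
    exact Fin.succ_ne_zero i (r.injective h)
  have hGdeg : ∀ i j, ((A.submatrix Fin.succ Fin.succ) i j).totalDegree ≤ 1 := by
    intro i j
    show (M (r i.succ) (c j.succ)).totalDegree ≤ 1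
    rw [hMdef, Matrix.updateRow_ne (hGne i)]
    exact deg_P m _ _
  have hNpos : 0 < (∏ i, (m i + 1)) - 1 := by omega
  set ε : ℚ := ((Equiv.Perm.sign τ : ℤ) : ℚ) * (-1) ^ (∑ j, m j) with hεdef
  set G : Matrix (Fin ((∏ i, (m i + 1)) - 1)) (Fin ((∏ i, (m i + 1)) - 1)) (R n m) :=
    A.submatrix Fin.succ Fin.succ with hGdef
  refine ⟨fun i j => G.updateRow ⟨0, hNpos⟩ ((MvPolynomial.C ε : R n m) • G ⟨0, hNpos⟩) i j, ?_, ?_⟩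
  · intro i j
    show ((G.updateRow ⟨0, hNpos⟩ ((MvPolynomial.C ε : R n m) • G ⟨0, hNpos⟩)) i j).totalDegree ≤ 1
    by_cases hii : i = ⟨0, hNpos⟩
    · subst hii
      rw [Matrix.updateRow_self, Pi.smul_apply, smul_eq_mul]
      refine le_trans (totalDegree_mul _ _) ?_
      rw [totalDegree_C]
      simpa using hGdeg ⟨0, hNpos⟩ j
    · rw [Matrix.updateRow_ne hii]
      exact hGdeg i j
  · show (G.updateRow ⟨0, hNpos⟩ ((MvPolynomial.C ε : R n m) • G ⟨0, hNpos⟩)).det = _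
    rw [Matrix.det_updateRow_smul, Matrix.updateRow_eq_self, hGdef, ← hdetA2, hdetA]
    have hsign : ((Equiv.Perm.sign τ : ℤ) : R n m) * ((Equiv.Perm.sign τ : ℤ) : R n m) = 1 := by
      rcases Int.units_eq_one_or (Equiv.Perm.sign τ) with h | h <;> rw [h] <;> norm_num
    have hneg : (-1 : R n m) ^ (∑ j, m j) * (-1 : R n m) ^ (∑ j, m j) = 1 := by
      rw [← pow_add]
      exact Even.neg_one_pow ⟨∑ j, m j, rfl⟩
    have hCε : (MvPolynomial.C ε : R n m)
        = ((Equiv.Perm.sign τ : ℤ) : R n m) * (-1 : R n m) ^ (∑ j, m j) := by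
      rw [hεdef, _root_.map_mul, _root_.map_pow, _root_.map_neg, _root_.map_one,
        map_intCast (MvPolynomial.C : ℚ →+* R n m)]
    rw [hCε]
    calc (((Equiv.Perm.sign τ : ℤ) : R n m) * (-1 : R n m) ^ (∑ j, m j))
          * (((Equiv.Perm.sign τ : ℤ) : R n m)
            * ((-1 : R n m) ^ (∑ j, m j) * mpermPoly (∑ j, m j) n m))
        = (((Equiv.Perm.sign τ : ℤ) : R n m) * ((Equiv.Perm.sign τ : ℤ) : R n m))
          * (((-1 : R n m) ^ (∑ j, m j) * (-1 : R n m) ^ (∑ j, m j))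
            * mpermPoly (∑ j, m j) n m) := by ring
      _ = mpermPoly (∑ j, m j) n m := by rw [hsign, hneg, one_mul, one_mul]

end DCMperm

/-- The determinantal complexity of the multipermanent is at most
`∏ (m_i + 1) - 1`: there is a square matrix of that size with affine-linear
entries whose determinant equals `mperm_m`. -/

theorem dc_mperm_upper_bound (n : ℕ) (m : Fin n → ℕ) :
    ∃ F : Fin (∏ i, (m i + 1) - 1) → Fin (∏ i, (m i + 1) - 1) →
        MvPolynomial (Fin (∑ j, m j) × Fin n) ℚ,
      (∀ i j, (F i j).totalDegree ≤ 1) ∧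
        (Matrix.of F).det = mpermPoly (∑ j, m j) n m := by
  by_cases hm : ∀ i, m i = 0
  · have hS1 : (∏ i, (m i + 1)) = 1 :=
      Finset.prod_eq_one fun i _ => by have := hm i; omega
    have hγ : (∑ j, m j) = 0 := Finset.sum_eq_zero fun j _ => hm j
    haveI hempty : IsEmpty (Fin ((∏ i, (m i + 1)) - 1)) :=
      ⟨fun i => by have := i.2; omega⟩
    haveI hFinγ : IsEmpty (Fin (∑ j, m j)) :=
      ⟨fun i => by have := i.2; omega⟩
    refine ⟨fun _ _ => 0, fun i j => by simp, ?_⟩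
    rw [Matrix.det_isEmpty]
    rw [mpermPoly]
    rw [Finset.filter_true_of_mem (fun σ _ => fun j => by
      simp [Finset.univ_eq_empty, hm j])]
    have hone : ∀ σ : Fin (∑ j, m j) → Fin n,
        (∏ i, (X (i, σ i) : MvPolynomial (Fin (∑ j, m j) × Fin n) ℚ)) = 1 := fun σ =>
      Finset.prod_of_isEmpty _
    rw [Finset.sum_congr rfl fun σ _ => hone σ, Finset.sum_const, Finset.card_univ,
      Fintype.card_unique, one_smul]
  · push_neg at hm
    exact DCMperm.main_pos m hm
end

section
/- Let P be a graded poset of rank d with p elements, having unique minimum 0̂ and unique maximum 1̂, and let each edge e of its Hasse diagram be labeled by a linear form L_e in variables x_1,…,x_N. Then the polynomial f = Σ_C Π_{e∈C} L_e, summed over saturated chains C from 0̂ to 1̂, has a determinantal representation of size p - 1; i.e., f = ±det(A) for a (p-1)×(p-1) matrix A whose entries are affine-linear in x_1,…,x_N. -/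
set_option linter.unusedSectionVars false
set_option linter.unusedTactic false
set_option maxHeartbeats 1000000


open MvPolynomial Matrix Finset


section Grenet

variable {P : Type*} [Fintype P] [PartialOrder P] [BoundedOrder P] {Nvars : ℕ}

open scoped Classical

/-- The Grenet-style matrix: Hasse diagram with `⊥` and `⊤` identified (the merged
vertex is `⊥`), self-loops of weight 1 at all other vertices. Row `r`, column `c`
entry is `δ_{r=c, r≠⊥} + [r ⋖ g c] ⬝ L r (g c)` where `g ⊥ = ⊤`. -/
noncomputable def grenetMat (L : P → P → MvPolynomial (Fin Nvars) ℚ) :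
    Matrix {x : P // x ≠ ⊤} {x : P // x ≠ ⊤} (MvPolynomial (Fin Nvars) ℚ) :=
  fun r c =>
    (if r = c ∧ (r : P) ≠ ⊥ then 1 else 0) +
    (if (r : P) ⋖ (if (c : P) = ⊥ then (⊤ : P) else (c : P)) then
        L (r : P) (if (c : P) = ⊥ then (⊤ : P) else (c : P)) else 0)

def chainPred (d : ℕ) (c : Fin (d + 1) → P) : Prop :=
  c 0 = ⊥ ∧ c (Fin.last d) = ⊤ ∧ ∀ i : Fin d, c i.castSucc ⋖ c i.succ

theorem chainPred.strictMono {d : ℕ} {c : Fin (d + 1) → P} (h : chainPred d c) :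
    StrictMono c :=
  Fin.strictMono_iff_lt_succ.mpr fun i => (h.2.2 i).lt

theorem chainPred.ne_top {d : ℕ} {c : Fin (d + 1) → P} (h : chainPred d c) (t : Fin d) :
    c t.castSucc ≠ ⊤ := by
  have : c t.castSucc < c (Fin.last d) := h.strictMono (Fin.castSucc_lt_last t)
  rw [h.2.1] at this
  exact this.ne

noncomputable def chainEmb (d : ℕ) (c : Fin (d + 1) → P) (h : chainPred d c) :
    Fin d ↪ {x : P // x ≠ ⊤} :=
  ⟨fun t => ⟨c t.castSucc, h.ne_top t⟩, fun s t hst => by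
    have := h.strictMono.injective (congrArg Subtype.val hst)
    exact Fin.castSucc_injective _ this⟩

@[simp] theorem chainEmb_apply {d : ℕ} {c : Fin (d + 1) → P} (h : chainPred d c) (t : Fin d) :
    (chainEmb d c h t : P) = c t.castSucc := rfl

noncomputable def chainPerm (d : ℕ) (c : Fin (d + 1) → P) :
    Equiv.Perm {x : P // x ≠ ⊤} :=
  if h : chainPred d c then
    Equiv.Perm.viaFintypeEmbedding (finRotate d).symm (chainEmb d c h) else 1

theorem chainPerm_emb {d : ℕ} {c : Fin (d + 1) → P} (h : chainPred d c) (t : Fin d) :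
    chainPerm d c (chainEmb d c h t) = chainEmb d c h ((finRotate d).symm t) := by
  rw [chainPerm, dif_pos h]
  exact Equiv.Perm.viaFintypeEmbedding_apply_image _ _ _

theorem chainPerm_not_range {d : ℕ} {c : Fin (d + 1) → P} (h : chainPred d c)
    {i : {x : P // x ≠ ⊤}} (hi : i ∉ Set.range (chainEmb d c h)) : chainPerm d c i = i := by
  rw [chainPerm, dif_pos h]
  exact Equiv.Perm.viaFintypeEmbedding_apply_notMem_range _ _ hi

theorem chainPerm_symm_emb {d : ℕ} {c : Fin (d + 1) → P} (h : chainPred d c) (t : Fin d) :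
    (chainPerm d c).symm (chainEmb d c h t) = chainEmb d c h (finRotate d t) := by
  rw [Equiv.symm_apply_eq, chainPerm_emb h, Equiv.symm_apply_apply]

theorem chainPerm_sign {d : ℕ} {c : Fin (d + 1) → P} (h : chainPred d c) :
    Equiv.Perm.sign (chainPerm d c) = (-1 : ℤˣ) ^ (d - 1) := by
  rw [chainPerm, dif_pos h, Equiv.Perm.viaFintypeEmbedding_sign, Equiv.Perm.sign_symm]
  rcases Nat.eq_zero_or_pos d with rfl | hd
  · simp [Subsingleton.elim (finRotate 0) 1]
  · obtain ⟨d', rfl⟩ := Nat.exists_eq_succ_of_ne_zero hd.ne'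
    rw [sign_finRotate]

end Grenet


section Grenet

variable {P : Type*} [Fintype P] [PartialOrder P] [BoundedOrder P] {Nvars : ℕ}

open scoped Classical


theorem chainPred.d_ne_zero {d : ℕ} {c : Fin (d + 1) → P} (h : chainPred d c)
    (hbt : (⊥ : P) ≠ ⊤) : d ≠ 0 := by
  rintro rfl
  exact hbt (h.1.symm.trans h.2.1)

theorem grenet_prod_chain {d : ℕ} {c : Fin (d + 1) → P}
    (L : P → P → MvPolynomial (Fin Nvars) ℚ) (h : chainPred d c) (hbt : (⊥ : P) ≠ ⊤) :
    ∏ i : {x : P // x ≠ ⊤}, grenetMat L (chainPerm d c i) i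
      = ∏ t : Fin d, L (c t.castSucc) (c t.succ) := by
  obtain ⟨d', rfl⟩ := Nat.exists_eq_succ_of_ne_zero (h.d_ne_zero hbt)
  set e := chainEmb (d' + 1) c h with he
  -- the key entry computation
  have key : ∀ t : Fin (d' + 1),
      grenetMat L (e ((finRotate (d' + 1)).symm t)) (e t)
        = L (c ((finRotate (d' + 1)).symm t).castSucc)
            (c ((finRotate (d' + 1)).symm t).succ) := by
    intro t
    set s := (finRotate (d' + 1)).symm t with hs
    have hst : s + 1 = t := by
      rw [hs, ← finRotate_succ_apply, Equiv.apply_symm_apply]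
    have h1 : ¬(e s = e t ∧ ((e s : P)) ≠ ⊥) := by
      rintro ⟨heq, hne⟩
      have hs_t : s = t := e.injective heq
      have h10 : (1 : Fin (d' + 1)) = 0 := by
        have h2 : s + 1 = s := by rw [hst]; exact hs_t.symm
        exact add_left_cancel (h2.trans (add_zero s).symm)
      have hd0 : d' = 0 := by
        have := Fin.one_eq_zero_iff.mp h10
        omega
      subst hd0
      apply hne
      have hs0 : s = 0 := by
        have := s.isLt
        ext
        simp only [Fin.val_zero]
        omega
      rw [he, chainEmb_apply, hs0, Fin.castSucc_zero, h.1]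
    have hgcol : (if ((e t : P)) = ⊥ then (⊤ : P) else ((e t : P))) = c s.succ := by
      by_cases ht0 : t = 0
      · subst ht0
        have hsl : s = Fin.last d' := by
          rw [hs, ← finRotate_last, Equiv.symm_apply_apply]
        rw [if_pos, hsl, Fin.succ_last, h.2.1]
        rw [he, chainEmb_apply, Fin.castSucc_zero, h.1]
      · have hne : ((e t : P)) ≠ ⊥ := by
          rw [he, chainEmb_apply]
          intro hb
          have : c t.castSucc = c 0 := by rw [hb, h.1]
          have := h.strictMono.injective this
          apply ht0
          exact Fin.castSucc_injective _ (this.trans Fin.castSucc_zero.symm)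
        rw [if_neg hne, he, chainEmb_apply]
        congr 1
        have hsl : s ≠ Fin.last d' := by
          intro hl
          apply ht0
          rw [← hst, hl, Fin.last_add_one]
        have : ((s + 1 : Fin (d' + 1)) : ℕ) = (s : ℕ) + 1 :=
          Fin.val_add_one_of_lt (lt_of_le_of_ne (Fin.le_last s) hsl)
        ext
        rw [← hst]
        simpa using this
    show (if e s = e t ∧ ((e s : P)) ≠ ⊥ then 1 else 0) +
        (if ((e s : P)) ⋖ (if ((e t : P)) = ⊥ then (⊤ : P) else ((e t : P))) then
          L ((e s : P)) (if ((e t : P)) = ⊥ then (⊤ : P) else ((e t : P))) else 0) = _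
    rw [if_neg h1, zero_add, hgcol, he, chainEmb_apply, if_pos (h.2.2 s)]
  -- split the product
  rw [← Finset.prod_mul_prod_compl (Finset.univ.map e)]
  have hcompl : ∀ i ∈ (Finset.univ.map e)ᶜ,
      grenetMat L (chainPerm (d' + 1) c i) i = 1 := by
    intro i hi
    rw [Finset.mem_compl, Finset.mem_map] at hi
    push_neg at hi
    have hrange : i ∉ Set.range e := by
      rintro ⟨t, ht⟩
      exact hi t (Finset.mem_univ t) ht
    rw [chainPerm_not_range h hrange]
    have hne : (i : P) ≠ ⊥ := by
      intro hb
      apply hi ⟨0, Nat.succ_pos d'⟩ (Finset.mem_univ _)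
      apply Subtype.ext
      rw [chainEmb_apply, show Fin.castSucc (⟨0, Nat.succ_pos d'⟩ : Fin (d' + 1)) = 0 from rfl,
        h.1, hb]
    show (if i = i ∧ ((i : P)) ≠ ⊥ then 1 else 0) +
        (if ((i : P)) ⋖ (if ((i : P)) = ⊥ then (⊤ : P) else ((i : P))) then
          L ((i : P)) (if ((i : P)) = ⊥ then (⊤ : P) else ((i : P))) else 0) = 1
    rw [if_pos ⟨rfl, hne⟩, if_neg hne, if_neg (fun hc => lt_irrefl _ hc.lt), add_zero]
  rw [Finset.prod_congr rfl hcompl, Finset.prod_const_one, mul_one, Finset.prod_map]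
  have : ∀ t : Fin (d' + 1),
      grenetMat L (chainPerm (d' + 1) c (e t)) (e t)
        = L (c ((finRotate (d' + 1)).symm t).castSucc)
            (c ((finRotate (d' + 1)).symm t).succ) := by
    intro t
    rw [he, chainPerm_emb h, ← he, key]
  rw [Finset.prod_congr rfl (fun t _ => this t)]
  exact Equiv.prod_comp (finRotate (d' + 1)).symm
    (fun s => L (c s.castSucc) (c s.succ))

end Grenet


section Grenet

variable {P : Type*} [Fintype P] [PartialOrder P] [BoundedOrder P] {Nvars : ℕ}

open scoped Classical


theorem chainPerm_inj {d : ℕ} {c c' : Fin (d + 1) → P} (hbt : (⊥ : P) ≠ ⊤)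
    (h : chainPred d c) (h' : chainPred d c')
    (heq : chainPerm d c = chainPerm d c') : c = c' := by
  rcases Nat.eq_zero_or_pos d with rfl | hd
  · exact absurd (h.1.symm.trans h.2.1) hbt
  obtain ⟨d', rfl⟩ := Nat.exists_eq_succ_of_ne_zero hd.ne'
  have z : {x : P // x ≠ ⊤} := ⟨⊥, hbt⟩
  have hrec : ∀ (cc : Fin (d' + 1 + 1) → P) (hcc : chainPred (d' + 1) cc),
      ∀ t : ℕ, ∀ ht : t < d' + 1,
        ((chainPerm (d' + 1) cc).symm ^ t) ⟨⊥, hbt⟩ = chainEmb (d' + 1) cc hcc ⟨t, ht⟩ := by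
    intro cc hcc t
    induction t with
    | zero =>
      intro ht
      apply Subtype.ext
      simp only [pow_zero, Equiv.Perm.coe_one, id_eq, chainEmb_apply]
      exact (by rw [show Fin.castSucc (⟨0, ht⟩ : Fin (d' + 1)) = 0 from rfl, hcc.1] :
        (⊥ : P) = cc (Fin.castSucc ⟨0, ht⟩)).symm ▸ rfl
    | succ t ih =>
      intro ht
      have ht' : t < d' + 1 := by omega
      rw [pow_succ', Equiv.Perm.mul_apply, ih ht', chainPerm_symm_emb hcc]
      congr 1
      rw [finRotate_succ_apply]
      have hlt : (⟨t, ht'⟩ : Fin (d' + 1)) < Fin.last d' := by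
        rw [Fin.lt_iff_val_lt_val, Fin.val_last]
        exact (by omega : t < d')
      ext
      rw [Fin.val_add_one_of_lt hlt]
  funext t
  induction t using Fin.lastCases with
  | last => rw [h.2.1, h'.2.1]
  | cast u =>
    have h1 := hrec c h u.val u.isLt
    have h2 := hrec c' h' u.val u.isLt
    rw [heq] at h1
    have h3 := h1.symm.trans h2
    have h4 := congrArg Subtype.val h3
    rw [chainEmb_apply, chainEmb_apply] at h4
    simpa [Fin.eta] using h4

theorem grenet_offchain {d : ℕ}
    (hgrade : ∀ (e : ℕ) (cc : Fin (e + 1) → P), cc 0 = ⊥ → cc (Fin.last e) = ⊤ →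
      (∀ i : Fin e, cc i.castSucc ⋖ cc i.succ) → e = d)
    (L : P → P → MvPolynomial (Fin Nvars) ℚ) (hbt : (⊥ : P) ≠ ⊤)
    (σ : Equiv.Perm {x : P // x ≠ ⊤})
    (hσ : ∀ cc : Fin (d + 1) → P, chainPred d cc → chainPerm d cc ≠ σ) :
    ∏ i : {x : P // x ≠ ⊤}, grenetMat L (σ i) i = 0 := by
  by_contra hne
  have hall : ∀ i, grenetMat L (σ i) i ≠ 0 :=
    fun i => Finset.prod_ne_zero_iff.mp hne i (Finset.mem_univ i)
  have dichot : ∀ i : {x : P // x ≠ ⊤},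
      (σ i = i ∧ ((σ i : P)) ≠ ⊥) ∨
      ((σ i : P)) ⋖ (if ((i : P)) = ⊥ then (⊤ : P) else (i : P)) := by
    intro i
    by_contra hcon
    obtain ⟨hcon1, hcon2⟩ := not_or.mp hcon
    apply hall i
    show (if σ i = i ∧ ((σ i : P)) ≠ ⊥ then (1 : MvPolynomial (Fin Nvars) ℚ) else 0) +
      (if ((σ i : P)) ⋖ (if ((i : P)) = ⊥ then (⊤ : P) else (i : P)) then
        L ((σ i : P)) (if ((i : P)) = ⊥ then (⊤ : P) else (i : P)) else 0) = 0
    rw [if_neg hcon1, if_neg hcon2, add_zero]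
  set z : {x : P // x ≠ ⊤} := ⟨⊥, hbt⟩ with hzdef
  set b : ℕ → {x : P // x ≠ ⊤} := fun t => (σ.symm ^ t) z with hbdef
  have hb0 : b 0 = z := by simp [hbdef]
  have hbsucc : ∀ t, b (t + 1) = σ.symm (b t) := by
    intro t; simp [hbdef, pow_succ', Equiv.Perm.mul_apply]
  have hstep : ∀ t, σ (b (t + 1)) = b t := by
    intro t; rw [hbsucc]; exact σ.apply_symm_apply _
  have hper : ∃ m, 0 < m ∧ b m = z :=
    ⟨orderOf σ.symm, orderOf_pos σ.symm, by
      show ((σ.symm ^ orderOf σ.symm) z) = z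
      rw [pow_orderOf_eq_one]; rfl⟩
  obtain ⟨k, ⟨hk0, hbk⟩, hmin⟩ :
      ∃ k, (0 < k ∧ b k = z) ∧ ∀ m, m < k → ¬(0 < m ∧ b m = z) :=
    ⟨Nat.find hper, Nat.find_spec hper, fun m hm => Nat.find_min hper hm⟩
  have binj : ∀ s t, s < t → t < k → b s ≠ b t := by
    intro s t hst htk heq
    have h3 : (σ.symm ^ s) ((σ.symm ^ (t - s)) z) = (σ.symm ^ s) z := by
      rw [← Equiv.Perm.mul_apply, ← pow_add, show s + (t - s) = t from by omega]
      exact heq.symm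
    have h4 : b (t - s) = z := (Equiv.injective _) h3
    exact hmin (t - s) (by omega) ⟨by omega, h4⟩
  have hbne_z : ∀ t, 0 < t → t < k → b t ≠ z :=
    fun t h0 hk heq => binj 0 t h0 hk (hb0.trans heq.symm)
  have hval : ∀ i : {x : P // x ≠ ⊤}, i ≠ z → (i : P) ≠ ⊥ :=
    fun i hi hv => hi (Subtype.ext hv)
  have hcov : ∀ t, t + 1 < k → (b t : P) ⋖ (b (t + 1) : P) := by
    intro t ht
    rcases dichot (b (t + 1)) with ⟨hfix, _⟩ | hcv
    · exact absurd ((hstep t).symm.trans hfix) (binj t (t + 1) (Nat.lt_succ_self t) ht)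
    · rw [hstep t] at hcv
      rwa [if_neg (hval _ (hbne_z (t + 1) (Nat.succ_pos t) ht))] at hcv
  have htop : (b (k - 1) : P) ⋖ ⊤ := by
    have h1 : σ z = b (k - 1) := by
      have h2 := hstep (k - 1)
      rwa [show k - 1 + 1 = k from by omega, hbk] at h2
    rcases dichot z with ⟨hfz, hh⟩ | hcv
    · exact absurd (by rw [hfz] : ((σ z : P)) = ⊥) hh
    · rwa [if_pos rfl, h1] at hcv
  set cc : Fin (k + 1) → P := fun t => if (t : ℕ) = k then ⊤ else (b (t : ℕ) : P)
    with hccdef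
  have hcc0 : cc 0 = ⊥ := by
    simp only [hccdef]
    rw [if_neg (by simp only [Fin.val_zero]; omega), Fin.val_zero, hb0]
  have hcclast : cc (Fin.last k) = ⊤ := by
    simp [hccdef]
  have hcccov : ∀ i : Fin k, cc i.castSucc ⋖ cc i.succ := by
    intro i
    have hik' := i.isLt
    simp only [hccdef, Fin.coe_castSucc, Fin.val_succ]
    rw [if_neg (by omega : ¬((i : ℕ) = k))]
    by_cases hik : (i : ℕ) + 1 = k
    · rw [if_pos hik, show (i : ℕ) = k - 1 from by omega]
      exact htop
    · rw [if_neg hik]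
      exact hcov (i : ℕ) (by omega)
  have hkd : k = d := hgrade k cc hcc0 hcclast hcccov
  subst hkd
  have hpred : chainPred k cc := ⟨hcc0, hcclast, hcccov⟩
  have hembb : ∀ t : Fin k, chainEmb k cc hpred t = b (t : ℕ) := by
    intro t
    apply Subtype.ext
    rw [chainEmb_apply]
    simp only [hccdef, Fin.coe_castSucc]
    rw [if_neg (by have := t.isLt; omega : ¬((t : ℕ) = k))]
  refine hσ cc hpred (Equiv.ext fun i => ?_)
  by_cases hir : i ∈ Set.range (chainEmb k cc hpred)
  · obtain ⟨t, rfl⟩ := hir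
    rw [chainPerm_emb hpred]
    simp only [hembb]
    obtain ⟨k', rfl⟩ : ∃ k', k = k' + 1 := ⟨k - 1, by omega⟩
    by_cases ht0 : t = 0
    · subst ht0
      have hs : (finRotate (k' + 1)).symm 0 = Fin.last k' := by
        rw [← finRotate_last, Equiv.symm_apply_apply]
      rw [hs, Fin.val_last, Fin.val_zero, hb0]
      have h1 : σ z = b k' := by
        have h2 := hstep k'
        rwa [hbk] at h2
      exact h1.symm
    · have hts : (finRotate (k' + 1)).symm t + 1 = t := by
        rw [← finRotate_succ_apply, Equiv.apply_symm_apply]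
      set s := (finRotate (k' + 1)).symm t with hsdef
      have hsl : s ≠ Fin.last k' := fun hl => ht0 (by rw [← hts, hl, Fin.last_add_one])
      have hsv : ((s + 1 : Fin (k' + 1)) : ℕ) = (s : ℕ) + 1 :=
        Fin.val_add_one_of_lt (lt_of_le_of_ne (Fin.le_last s) hsl)
      have htv : (t : ℕ) = (s : ℕ) + 1 := by rw [← hts, hsv]
      rw [htv]
      exact (hstep (s : ℕ)).symm
  · rw [chainPerm_not_range hpred hir]
    by_contra hne2
    set T : Finset {x : P // x ≠ ⊤} :=
      Finset.univ.filter (fun j => σ j ≠ j ∧ ∀ t, t < k → b t ≠ j) with hT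
    have hiT : i ∈ T := by
      rw [hT, Finset.mem_filter]
      refine ⟨Finset.mem_univ i, fun h => hne2 h.symm, ?_⟩
      intro t ht heq
      exact hir ⟨⟨t, ht⟩, (hembb ⟨t, ht⟩).trans heq⟩
    obtain ⟨m, hmT, hmmin⟩ := Finset.exists_minimal (s := T) ⟨i, hiT⟩
    rw [hT, Finset.mem_filter] at hmT
    obtain ⟨-, hmfix, hmorb⟩ := hmT
    have hmz : m ≠ z := fun h => hmorb 0 hk0 (hb0.trans h.symm)
    have hmbot : (m : P) ≠ ⊥ := hval m hmz
    rcases dichot m with ⟨hfix, -⟩ | hcv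
    · exact hmfix hfix
    · rw [if_neg hmbot] at hcv
      have hlt : σ m < m := Subtype.coe_lt_coe.mp hcv.lt
      have hσmT : σ m ∈ T := by
        rw [hT, Finset.mem_filter]
        refine ⟨Finset.mem_univ _, ?_, ?_⟩
        · intro hfix2
          exact absurd (σ.injective hfix2) (ne_of_lt hlt)
        · intro t ht heq
          have hm1 : b (t + 1) = m := by
            rw [hbsucc t, heq, Equiv.symm_apply_apply]
          rcases Nat.lt_or_ge (t + 1) k with h1 | h1
          · exact hmorb (t + 1) h1 hm1
          · have h2 : t + 1 = k := by omega
            rw [h2, hbk] at hm1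
            exact hmz hm1.symm
      exact absurd (hmmin hσmT hlt.le) (not_le_of_gt hlt)

end Grenet


section Grenet

variable {P : Type*} [Fintype P] [PartialOrder P] [BoundedOrder P] {Nvars : ℕ}

open scoped Classical


theorem grenet_det {d : ℕ}
    (hgrade : ∀ (e : ℕ) (cc : Fin (e + 1) → P), cc 0 = ⊥ → cc (Fin.last e) = ⊤ →
      (∀ i : Fin e, cc i.castSucc ⋖ cc i.succ) → e = d)
    (L : P → P → MvPolynomial (Fin Nvars) ℚ) (hbt : (⊥ : P) ≠ ⊤) :
    (grenetMat L).det = (-1 : MvPolynomial (Fin Nvars) ℚ) ^ (d - 1) *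
      ∑ c : Fin (d + 1) → P,
        if c 0 = ⊥ ∧ c (Fin.last d) = ⊤ ∧ (∀ i : Fin d, c i.castSucc ⋖ c i.succ) then
          ∏ i : Fin d, L (c i.castSucc) (c i.succ)
        else 0 := by
  rw [Matrix.det_apply']
  set chains : Finset (Fin (d + 1) → P) := Finset.univ.filter (chainPred d) with hch
  have himg : ∀ σ ∈ (Finset.univ : Finset (Equiv.Perm {x : P // x ≠ ⊤})),
      σ ∉ chains.image (chainPerm d) →
      ((↑↑(Equiv.Perm.sign σ) : MvPolynomial (Fin Nvars) ℚ) *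
        ∏ i, grenetMat L (σ i) i) = 0 := by
    intro σ _ hσ
    have hnc : ∀ cc, chainPred d cc → chainPerm d cc ≠ σ := by
      intro cc hcc hne
      exact hσ (Finset.mem_image.mpr ⟨cc,
        Finset.mem_filter.mpr ⟨Finset.mem_univ _, hcc⟩, hne⟩)
    rw [grenet_offchain hgrade L hbt σ hnc, mul_zero]
  rw [← Finset.sum_subset (Finset.subset_univ (chains.image (chainPerm d))) himg]
  have hinj : ∀ x ∈ chains, ∀ y ∈ chains, chainPerm d x = chainPerm d y → x = y :=
    fun x hx y hy => chainPerm_inj hbt (Finset.mem_filter.mp hx).2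
      (Finset.mem_filter.mp hy).2
  rw [Finset.sum_image hinj]
  have hterm : ∀ c ∈ chains,
      ((↑↑(Equiv.Perm.sign (chainPerm d c)) : MvPolynomial (Fin Nvars) ℚ) *
        ∏ i, grenetMat L (chainPerm d c i) i)
      = (-1 : MvPolynomial (Fin Nvars) ℚ) ^ (d - 1) *
          ∏ t : Fin d, L (c t.castSucc) (c t.succ) := by
    intro c hc
    have hcp : chainPred d c := (Finset.mem_filter.mp hc).2
    rw [grenet_prod_chain L hcp hbt, chainPerm_sign hcp]
    congr 1
    push_cast
    simp
  rw [Finset.sum_congr rfl hterm, ← Finset.mul_sum]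
  congr 1
  rw [hch, Finset.sum_filter]
  exact Finset.sum_congr rfl fun c _ => if_congr Iff.rfl rfl rfl

theorem grenetMat_totalDegree (L : P → P → MvPolynomial (Fin Nvars) ℚ)
    (hL : ∀ x y : P, x ⋖ y → (L x y).IsHomogeneous 1) (r c : {x : P // x ≠ ⊤}) :
    (grenetMat L r c).totalDegree ≤ 1 := by
  refine le_trans (MvPolynomial.totalDegree_add _ _) (max_le ?_ ?_)
  · split_ifs <;> simp
  · by_cases hcov : (r : P) ⋖ (if (c : P) = ⊥ then (⊤ : P) else (c : P))
    · rw [if_pos hcov]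
      exact (hL _ _ hcov).totalDegree_le
    · rw [if_neg hcov]
      simp

end Grenet

open scoped Classical in
/-- (Grenet-style construction) Let `P` be a finite bounded poset in which every
saturated chain from `⊥` to `⊤` has length `d` (i.e. `P` is graded of rank `d`),
with `p` elements, and label each edge of its Hasse diagram by a linear form
`L x y` in variables `x_1, …, x_N`.  Then the polynomial
`f = Σ_C Π_{e ∈ C} L_e`, summed over saturated chains `C` from `⊥` to `⊤`,
has a determinantal representation of size `p - 1`. -/
theorem poset_polynomial_det_rep (P : Type*) [Fintype P] [PartialOrder P] [BoundedOrder P]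
    (d Nvars : ℕ)
    (hgrade : ∀ (e : ℕ) (c : Fin (e + 1) → P), c 0 = ⊥ → c (Fin.last e) = ⊤ →
      (∀ i : Fin e, c i.castSucc ⋖ c i.succ) → e = d)
    (L : P → P → MvPolynomial (Fin Nvars) ℚ)
    (hL : ∀ x y : P, x ⋖ y → (L x y).IsHomogeneous 1)
    (f : MvPolynomial (Fin Nvars) ℚ)
    (hf : f = ∑ c : Fin (d + 1) → P,
      if c 0 = ⊥ ∧ c (Fin.last d) = ⊤ ∧ (∀ i : Fin d, c i.castSucc ⋖ c i.succ) then
        ∏ i : Fin d, L (c i.castSucc) (c i.succ)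
      else 0) :
    ∃ A : Matrix (Fin (Fintype.card P - 1)) (Fin (Fintype.card P - 1))
        (MvPolynomial (Fin Nvars) ℚ),
      (∀ i j, (A i j).totalDegree ≤ 1) ∧ (A.det = f ∨ A.det = -f) := by
  by_cases hbt : (⊥ : P) = ⊤
  · have hall : ∀ x : P, x = ⊥ := fun x => le_antisymm (le_top.trans hbt.ge) bot_le
    have hcard : Fintype.card P = 1 := Fintype.card_eq_one_iff.mpr ⟨⊥, fun y => hall y⟩
    haveI : IsEmpty (Fin (Fintype.card P - 1)) :=
      ⟨fun i => by have h := i.isLt; omega⟩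
    obtain rfl : (0 : ℕ) = d := hgrade 0 (fun _ => ⊥) rfl hbt (fun i => i.elim0)
    refine ⟨Matrix.of fun _ _ => 0, fun i j => by simp, Or.inl ?_⟩
    rw [Matrix.det_isEmpty, hf]
    have hone : ∀ c : Fin (0 + 1) → P,
        (if c 0 = ⊥ ∧ c (Fin.last 0) = ⊤ ∧ (∀ i : Fin 0, c i.castSucc ⋖ c i.succ) then
          ∏ i : Fin 0, L (c i.castSucc) (c i.succ) else 0) = 1 := by
      intro c
      rw [if_pos ⟨hall _, (hall _).trans hbt, fun i => i.elim0⟩]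
      simp
    rw [Finset.sum_congr rfl (fun c _ => hone c), Finset.sum_const, Finset.card_univ]
    have hc1 : Fintype.card (Fin (0 + 1) → P) = 1 := by
      simp [hcard]
    rw [hc1, one_smul]
  · have hcard : Fintype.card {x : P // x ≠ ⊤} = Fintype.card P - 1 := by
      have h1 := Fintype.card_subtype_compl (fun x : P => x = ⊤)
      rw [Fintype.card_subtype_eq] at h1
      exact h1
    have e : Fin (Fintype.card P - 1) ≃ {x : P // x ≠ ⊤} :=
      Fintype.equivOfCardEq (by rw [Fintype.card_fin, hcard])
    refine ⟨(grenetMat L).submatrix e e, fun i j => grenetMat_totalDegree L hL _ _, ?_⟩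
    rw [Matrix.det_submatrix_equiv_self, grenet_det hgrade L hbt, ← hf]
    rcases Nat.even_or_odd (d - 1) with hpar | hpar
    · left; rw [hpar.neg_one_pow, one_mul]
    · right; rw [hpar.neg_one_pow, neg_one_mul]
end
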